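/- arXiv:2207.02588 — 2 statements merged into one kernel-verified Lean document; each statement's English description precedes it below -/
import Mathlib

section
/- Let (X^{(n)}_t) be irreducible Markov chains on a finite set V with stationary measures π_n, and let V^{(p)}_1,…,V^{(p)}_{𝔫_p} be disjoint nonempty subsets (wells) with V^{(p)} their union. Define θ^{(p)}_n by 1/θ^{(p)}_n = Σ_i Cap_n(V^{(p)}_i, V̆^{(p)}_i)/π_n(V^{(p)}_i), where V̆^{(p)}_i is the union of the other wells. Suppose that for all j and x ∈ V^{(p)}_j, liminf_n π_n(x)/π_n(V^{(p)}_j) > 0. Then for every sequence β_n with β_n/θ^{(p)}_n → 0 and every j, x ∈ V^{(p)}_j, lim_n P^n_x[H_{V̆^{(p)}_j} < β_n] = 0. -/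
open Finset Filter Topology

noncomputable section

/-- Generator of a continuous-time Markov chain with jump rates `R`. -/
def gen {V : Type*} [Fintype V] (R : V → V → ℝ) (f : V → ℝ) (x : V) : ℝ :=
  ∑ y, R x y * (f y - f x)

/-- Generator of a chain restricted to the subset `W` (e.g. a trace process). -/
def genOn {V : Type*} [Fintype V] [DecidableEq V] (W : Finset V) (R : V → V → ℝ)
    (f : V → ℝ) (x : V) : ℝ :=
  ∑ y ∈ W, R x y * (f y - f x)

/-- Detailed balance (reversibility) of `π` for the rates `R`. -/
def Reversible {V : Type*} (R : V → V → ℝ) (π : V → ℝ) : Prop :=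
  ∀ x y, π x * R x y = π y * R y x

/-- Stationarity of `π` for the rates `R`. -/
def Stationary {V : Type*} [Fintype V] (R : V → V → ℝ) (π : V → ℝ) : Prop :=
  ∀ y, ∑ x, π x * R x y = π y * ∑ z, R y z

/-- Irreducibility of the rates `R`. -/
def Irred {V : Type*} (R : V → V → ℝ) : Prop :=
  ∀ x y : V, Relation.ReflTransGen (fun a b => 0 < R a b) x y

/-- `h` is the equilibrium potential `h(x) = P_x[H_A < H_B]` : it equals `1` on `A`,
`0` on `B` and is harmonic elsewhere. -/
def IsEqPotential {V : Type*} [Fintype V] (R : V → V → ℝ) (A B : Finset V)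
    (h : V → ℝ) : Prop :=
  (∀ x ∈ A, h x = 1) ∧ (∀ x ∈ B, h x = 0) ∧ ∀ x, x ∉ A → x ∉ B → gen R h x = 0

/-- The capacity `Cap(A,B) = ∑_{x∈A} π(x) λ(x) P_x[H_B < H_A⁺]`, expressed through the
equilibrium potential `h = h_{A,B}` as `-∑_{x∈A} π(x) (L h)(x)`. -/
def capFor {V : Type*} [Fintype V] (R : V → V → ℝ) (π : V → ℝ) (A : Finset V)
    (h : V → ℝ) : ℝ :=
  ∑ x ∈ A, π x * (-(gen R h x))

/-- The generator of the chain killed upon hitting `B` (rows and columns of `B` zeroed). -/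
def killedGen {V : Type*} [Fintype V] [DecidableEq V] (R : V → V → ℝ) (B : Finset V) :
    Matrix V V ℝ :=
  fun x y => if x ∈ B ∨ y ∈ B then 0
    else (if x = y then -(∑ z, R x z) else R x y)

/-- `P_x[H_B ≤ t]`, expressed via the semigroup of the killed chain. -/
def hitLE {V : Type*} [Fintype V] [DecidableEq V] (R : V → V → ℝ) (B : Finset V)
    (x : V) (t : ℝ) : ℝ :=
  1 - ∑ y, (NormedSpace.exp (t • killedGen R B)) x y

set_option linter.unusedSectionVars false
section AuxDev
variable {V : Type*} [Fintype V] [DecidableEq V]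
open NormedSpace
namespace Stmt18Aux

attribute [local instance] Matrix.linftyOpNormedRing Matrix.linftyOpNormedAlgebra

lemma pow_entry_nonneg {N : Matrix V V ℝ} (hN : ∀ x y, 0 ≤ N x y) (k : ℕ) :
    ∀ x y, 0 ≤ (N ^ k) x y := by
  induction k with
  | zero => intro x y; rw [pow_zero, Matrix.one_apply]; positivity
  | succ k ih =>
    intro x y
    rw [pow_succ, Matrix.mul_apply]
    exact Finset.sum_nonneg fun z _ => mul_nonneg (ih x z) (hN z y)

lemma exp_entry_nonneg' {N : Matrix V V ℝ} (hN : ∀ x y, 0 ≤ N x y) (x y : V) :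
    0 ≤ (exp N) x y := by
  rw [exp_eq_tsum ℝ]
  show 0 ≤ (∑' n : ℕ, ((n.factorial : ℝ))⁻¹ • N ^ n) x y
  have hs : Summable (fun n : ℕ => ((n.factorial : ℝ))⁻¹ • N ^ n) := expSeries_summable' N
  have h1 : (∑' n : ℕ, ((n.factorial : ℝ))⁻¹ • N ^ n) x y
      = ∑' n : ℕ, (((n.factorial : ℝ))⁻¹ • N ^ n) x y := by
    exact (congrFun (tsum_apply hs (x := x)) y).trans (tsum_apply ((Pi.summable).1 hs x))
  rw [h1]
  refine tsum_nonneg fun k => ?_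
  have : (((k.factorial : ℝ))⁻¹ • N ^ k) x y = ((k.factorial : ℝ))⁻¹ * (N ^ k) x y := rfl
  rw [this]
  exact mul_nonneg (by positivity) (pow_entry_nonneg hN k x y)

/-- The entry evaluation continuous linear map. -/
def entryCLM (x y : V) : Matrix V V ℝ →L[ℝ] ℝ where
  toLinearMap := (LinearMap.proj y).comp (LinearMap.proj (R := ℝ) (φ := fun _ : V => V → ℝ) x)
  cont := (continuous_apply y).comp (continuous_apply x)

omit [Fintype V] [DecidableEq V] in
@[simp] lemma entryCLM_apply (x y : V) (M : Matrix V V ℝ) : entryCLM x y M = M x y := rfl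

lemma hasDerivAt_exp_entry (K : Matrix V V ℝ) (x y : V) (t : ℝ) :
    HasDerivAt (fun s : ℝ => (exp (s • K)) x y) ((exp (t • K) * K) x y) t :=
  (entryCLM x y).hasFDerivAt.comp_hasDerivAt t (hasDerivAt_exp_smul_const K t)

lemma continuous_exp_entry (K : Matrix V V ℝ) (x y : V) :
    Continuous (fun s : ℝ => (exp (s • K)) x y) :=
  continuous_iff_continuousAt.2 fun t => (hasDerivAt_exp_entry K x y t).continuousAt

variable {K : Matrix V V ℝ}

/-- entrywise nonnegativity of `exp (t • K)` for a matrix with nonnegative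
off-diagonal entries, `t ≥ 0`. -/
lemma exp_entry_nonneg (hoff : ∀ x y, x ≠ y → 0 ≤ K x y) {t : ℝ} (ht : 0 ≤ t) (x y : V) :
    0 ≤ (exp (t • K)) x y := by
  set c : ℝ := ∑ z, |K z z| with hc
  have hcn : 0 ≤ c := Finset.sum_nonneg fun z _ => abs_nonneg _
  have hdiag : ∀ z, -K z z ≤ c := by
    intro z
    calc -K z z ≤ |K z z| := neg_le_abs _
    _ ≤ c := Finset.single_le_sum (f := fun z => |K z z|) (fun i _ => abs_nonneg _) (mem_univ z)
  set N : Matrix V V ℝ := t • K + (t * c) • 1 with hN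
  have hNnn : ∀ x y, 0 ≤ N x y := by
    intro x y
    simp only [hN, Matrix.add_apply, Matrix.smul_apply, smul_eq_mul]
    rcases eq_or_ne x y with rfl | hxy
    · rw [Matrix.one_apply_eq, mul_one]
      nlinarith [hdiag x]
    · rw [Matrix.one_apply_ne hxy, mul_zero, add_zero]
      exact mul_nonneg ht (hoff x y hxy)
  have hsplit : exp (t • K) = Real.exp (-(t * c)) • exp N := by
    have hcomm : Commute N ((-(t * c)) • (1 : Matrix V V ℝ)) := by
      apply Commute.smul_right
      exact (Commute.one_right N)
    have : t • K = N + (-(t * c)) • (1 : Matrix V V ℝ) := by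
      rw [hN]; abel_nf; simp [neg_smul]
    rw [this, Matrix.exp_add_of_commute _ _ hcomm]
    have hone : exp ((-(t * c)) • (1 : Matrix V V ℝ)) = Real.exp (-(t * c)) • 1 := by
      have := algebraMap_exp_comm (𝕂 := ℝ) (𝔸 := Matrix V V ℝ) (-(t * c))
      rw [Algebra.algebraMap_eq_smul_one, Algebra.algebraMap_eq_smul_one] at this
      rw [Real.exp_eq_exp_ℝ]; exact this.symm
    rw [hone, mul_smul_comm, mul_one]
  rw [hsplit]
  have : (Real.exp (-(t * c)) • exp N) x y = Real.exp (-(t * c)) * (exp N) x y := rfl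
  rw [this]
  exact mul_nonneg (Real.exp_nonneg _) (exp_entry_nonneg' hNnn x y)

section RowSum

variable {K : Matrix V V ℝ}

lemma rowsum_deriv_nonpos (hoff : ∀ x y, x ≠ y → 0 ≤ K x y) (hrow : ∀ x, ∑ y, K x y ≤ 0)
    {s : ℝ} (hs : 0 ≤ s) (x : V) : ∑ y, (exp (s • K) * K) x y ≤ 0 := by
  have : ∑ y, (exp (s • K) * K) x y = ∑ z, (exp (s • K)) x z * ∑ y, K z y := by
    simp_rw [Matrix.mul_apply, Finset.mul_sum]
    rw [Finset.sum_comm]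
  rw [this]
  refine Finset.sum_nonpos fun z _ => ?_
  exact mul_nonpos_of_nonneg_of_nonpos (exp_entry_nonneg hoff hs x z) (hrow z)

lemma exp_rowsum_le_one (hoff : ∀ x y, x ≠ y → 0 ≤ K x y) (hrow : ∀ x, ∑ y, K x y ≤ 0)
    {t : ℝ} (ht : 0 ≤ t) (x : V) : ∑ y, (exp (t • K)) x y ≤ 1 := by
  have hd : ∀ s ∈ Set.uIcc (0:ℝ) t, HasDerivAt (fun s : ℝ => ∑ y, (exp (s • K)) x y)
      (∑ y, (exp (s • K) * K) x y) s := by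
    intro s _
    exact HasDerivAt.fun_sum fun y _ => hasDerivAt_exp_entry K x y s
  have hint : IntervalIntegrable (fun s : ℝ => ∑ y, (exp (s • K) * K) x y)
      MeasureTheory.volume 0 t := by
    apply Continuous.intervalIntegrable
    refine continuous_finset_sum _ fun y _ => ?_
    have : (fun s : ℝ => (exp (s • K) * K) x y)
        = fun s : ℝ => ∑ z, (exp (s • K)) x z * K z y := by
      funext s; rw [Matrix.mul_apply]
    rw [this]
    exact continuous_finset_sum _ fun z _ => (continuous_exp_entry K x z).mul continuous_const
  have hftc := intervalIntegral.integral_eq_sub_of_hasDerivAt hd hint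
  have h0 : ∑ y, (exp ((0:ℝ) • K)) x y = 1 := by
    simp [exp_zero, Matrix.one_apply, Finset.sum_ite_eq' (Finset.univ) x]
  have hnonpos : (∫ s in (0:ℝ)..t, ∑ y, (exp (s • K) * K) x y) ≤ 0 := by
    have h2 : 0 ≤ ∫ s in (0:ℝ)..t, -∑ y, (exp (s • K) * K) x y :=
      intervalIntegral.integral_nonneg ht
        (fun u hu => neg_nonneg.2 (rowsum_deriv_nonpos hoff hrow hu.1 x))
    rw [intervalIntegral.integral_neg] at h2
    linarith
  rw [hftc, h0] at *
  linarith

lemma exp_entry_le_one (hoff : ∀ x y, x ≠ y → 0 ≤ K x y) (hrow : ∀ x, ∑ y, K x y ≤ 0)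
    {t : ℝ} (ht : 0 ≤ t) (x y : V) : (exp (t • K)) x y ≤ 1 := by
  calc (exp (t • K)) x y ≤ ∑ z, (exp (t • K)) x z :=
        Finset.single_le_sum (f := fun z => (exp (t • K)) x z)
          (fun z _ => exp_entry_nonneg hoff ht x z) (mem_univ y)
  _ ≤ 1 := exp_rowsum_le_one hoff hrow ht x

end RowSum

section Resolvent

variable {K : Matrix V V ℝ} {l : ℝ}

lemma diag_nonpos (hoff : ∀ x y, x ≠ y → 0 ≤ K x y) (hrow : ∀ x, ∑ y, K x y ≤ 0) (x : V) :
    K x x ≤ 0 := by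
  have h1 := hrow x
  rw [← Finset.add_sum_erase _ _ (mem_univ x)] at h1
  have h2 : 0 ≤ ∑ y ∈ Finset.univ.erase x, K x y :=
    Finset.sum_nonneg fun y hy => hoff x y (Ne.symm (Finset.ne_of_mem_erase hy))
  linarith

lemma resolvent_isUnit (hoff : ∀ x y, x ≠ y → 0 ≤ K x y) (hrow : ∀ x, ∑ y, K x y ≤ 0)
    (hl : 0 < l) : IsUnit (l • (1 : Matrix V V ℝ) - K) := by
  rw [← Matrix.mulVec_injective_iff_isUnit]
  have h0 : ∀ v, (l • (1 : Matrix V V ℝ) - K).mulVec v = 0 → v = 0 := by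
    intro v hv
    by_contra hne
    obtain ⟨x0, hx0⟩ := Function.ne_iff.1 hne
    obtain ⟨x, -, hx⟩ := Finset.exists_max_image Finset.univ (fun z => |v z|) ⟨x0, mem_univ _⟩
    have hvx : 0 < |v x| := lt_of_lt_of_le (abs_pos.2 hx0) (hx x0 (mem_univ _))
    have hv' : l * v x = ∑ y, K x y * v y := by
      have h1 : (l • (1 : Matrix V V ℝ) - K).mulVec v = l • v - K.mulVec v := by
        rw [Matrix.sub_mulVec, Matrix.smul_mulVec, Matrix.one_mulVec]
      rw [h1] at hv
      have h2 := congrFun hv x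
      simp only [Pi.sub_apply, Pi.smul_apply, smul_eq_mul, Pi.zero_apply, sub_eq_zero] at h2
      exact h2
    have hsplit : (l - K x x) * v x = ∑ y ∈ Finset.univ.erase x, K x y * v y := by
      rw [← Finset.add_sum_erase _ (fun y => K x y * v y) (mem_univ x)] at hv'
      ring_nf
      ring_nf at hv'
      linarith
    have habs : (l - K x x) * |v x| ≤ (-(K x x)) * |v x| := by
      have h3 : |(l - K x x) * v x| ≤ ∑ y ∈ Finset.univ.erase x, K x y * |v x| := by
        rw [hsplit]
        refine (Finset.abs_sum_le_sum_abs _ _).trans (Finset.sum_le_sum fun y hy => ?_)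
        have hK := hoff x y (Ne.symm (Finset.ne_of_mem_erase hy))
        rw [abs_mul, abs_of_nonneg hK]
        exact mul_le_mul_of_nonneg_left (hx y (mem_univ _)) hK
      have h5 : ∑ y ∈ Finset.univ.erase x, K x y ≤ -(K x x) := by
        have := hrow x
        rw [← Finset.add_sum_erase _ _ (mem_univ x)] at this
        linarith
      have h6 : (l - K x x) * |v x| = |(l - K x x) * v x| := by
        rw [abs_mul, abs_of_pos (show (0:ℝ) < l - K x x by
          have := diag_nonpos hoff hrow x; linarith)]
      rw [h6]
      calc |(l - K x x) * v x| ≤ (∑ y ∈ Finset.univ.erase x, K x y) * |v x| := by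
            rw [Finset.sum_mul] at *; exact h3
      _ ≤ (-(K x x)) * |v x| := mul_le_mul_of_nonneg_right h5 (abs_nonneg _)
    nlinarith
  intro a b hab
  have := h0 (a - b) (by rw [Matrix.mulVec_sub, hab, sub_self])
  rwa [sub_eq_zero] at this

lemma resolvent_entry (hoff : ∀ x y, x ≠ y → 0 ≤ K x y) (hrow : ∀ x, ∑ y, K x y ≤ 0)
    (hl : 0 < l) (t : ℝ) (x y : V) :
    (l • (1 : Matrix V V ℝ) - K)⁻¹ x y
      = (∫ s in (0:ℝ)..t, Real.exp (-(l * s)) * (exp (s • K)) x y)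
        + Real.exp (-(l * t)) * ((l • (1 : Matrix V V ℝ) - K)⁻¹ * exp (t • K)) x y := by
  set M : Matrix V V ℝ := l • (1 : Matrix V V ℝ) - K with hM
  have hMunit : IsUnit M.det := (Matrix.isUnit_iff_isUnit_det M).1 (resolvent_isUnit hoff hrow hl)
  have hAM : M⁻¹ * M = 1 := Matrix.nonsing_inv_mul M hMunit
  have hg : ∀ s : ℝ, HasDerivAt (fun s : ℝ => Real.exp (-(l * s)) * (M⁻¹ * exp (s • K)) x y)
      (-(Real.exp (-(l * s)) * (exp (s • K)) x y)) s := by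
    intro s
    have h1 : HasDerivAt (fun s : ℝ => Real.exp (-(l * s))) (-l * Real.exp (-(l * s))) s := by
      have hin : HasDerivAt (fun s : ℝ => -(l * s)) (-l) s := by
        simpa [Pi.neg_def] using ((hasDerivAt_id s).const_mul l).neg
      simpa [mul_comm] using hin.exp
    have h2m : HasDerivAt (fun s : ℝ => M⁻¹ * exp (s • K))
        (M⁻¹ * (exp (s • K) * K)) s :=
      (hasDerivAt_exp_smul_const K s).const_mul (M⁻¹)
    have h2 : HasDerivAt (fun s : ℝ => (M⁻¹ * exp (s • K)) x y)
        ((M⁻¹ * (exp (s • K) * K)) x y) s :=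
      (entryCLM x y).hasFDerivAt.comp_hasDerivAt s h2m
    have h3 := h1.mul h2
    have hmat : (-l) • (M⁻¹ * exp (s • K)) + M⁻¹ * (exp (s • K) * K)
        = -(exp (s • K)) := by
      have hcomm : exp (s • K) * K = K * exp (s • K) :=
        (((Commute.refl K).smul_left s).exp_left).eq
      rw [hcomm, ← Matrix.mul_assoc, ← smul_mul_assoc, ← add_mul]
      have h5 : (-l) • M⁻¹ + M⁻¹ * K = -(1 : Matrix V V ℝ) := by
        have h7 : M⁻¹ * (l • (1 : Matrix V V ℝ) - K) = 1 := by rw [← hM]; exact hAM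
        rw [Matrix.mul_sub, mul_smul_comm, Matrix.mul_one] at h7
        have h8 := congrArg (fun X : Matrix V V ℝ => -X) h7
        simp only [neg_sub] at h8
        rw [neg_smul, neg_add_eq_sub]
        exact h8
      rw [h5, neg_mul, one_mul]
    have halg : (-l * Real.exp (-(l * s))) * (M⁻¹ * exp (s • K)) x y
        + Real.exp (-(l * s)) * (M⁻¹ * (exp (s • K) * K)) x y
        = -(Real.exp (-(l * s)) * (exp (s • K)) x y) := by
      have h9 : Real.exp (-(l * s)) * (((-l) • (M⁻¹ * exp (s • K))
          + M⁻¹ * (exp (s • K) * K)) x y)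
          = (-l * Real.exp (-(l * s))) * (M⁻¹ * exp (s • K)) x y
            + Real.exp (-(l * s)) * (M⁻¹ * (exp (s • K) * K)) x y := by
        simp only [Matrix.add_apply, Matrix.smul_apply, smul_eq_mul]
        ring
      rw [← h9, hmat]
      simp only [Matrix.neg_apply]
      ring
    exact h3.congr_deriv halg
  have hd : ∀ s ∈ Set.uIcc (0:ℝ) t,
      HasDerivAt (fun s : ℝ => Real.exp (-(l * s)) * (M⁻¹ * exp (s • K)) x y)
      (-(Real.exp (-(l * s)) * (exp (s • K)) x y)) s := fun s _ => hg s
  have hcont : Continuous (fun s : ℝ => -(Real.exp (-(l * s)) * (exp (s • K)) x y)) := by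
    refine Continuous.neg (Continuous.mul ?_ (continuous_exp_entry K x y))
    exact Real.continuous_exp.comp (continuous_const.mul continuous_id).neg
  have hftc := intervalIntegral.integral_eq_sub_of_hasDerivAt hd (hcont.intervalIntegrable 0 t)
  rw [intervalIntegral.integral_neg] at hftc
  have hg0 : Real.exp (-(l * 0)) * (M⁻¹ * exp ((0:ℝ) • K)) x y = M⁻¹ x y := by
    simp [exp_zero]
  rw [hg0] at hftc
  have : (∫ s in (0:ℝ)..t, Real.exp (-(l * s)) * (exp (s • K)) x y)
      = M⁻¹ x y - Real.exp (-(l * t)) * (M⁻¹ * exp (t • K)) x y := by linarith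
  rw [this]; ring

lemma resolvent_nonneg (hoff : ∀ x y, x ≠ y → 0 ≤ K x y) (hrow : ∀ x, ∑ y, K x y ≤ 0)
    (hl : 0 < l) (x y : V) : 0 ≤ (l • (1 : Matrix V V ℝ) - K)⁻¹ x y := by
  set A : Matrix V V ℝ := (l • (1 : Matrix V V ℝ) - K)⁻¹ with hA
  set C : ℝ := ∑ z, |A x z| with hC
  have hbound : ∀ᶠ t : ℝ in atTop, -(Real.exp (-(l * t)) * C) ≤ A x y := by
    filter_upwards [eventually_ge_atTop (0:ℝ)] with t ht
    have hid := resolvent_entry hoff hrow hl t x y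
    have hint : 0 ≤ ∫ s in (0:ℝ)..t, Real.exp (-(l * s)) * (exp (s • K)) x y :=
      intervalIntegral.integral_nonneg ht fun u hu =>
        mul_nonneg (Real.exp_nonneg _) (exp_entry_nonneg hoff hu.1 x y)
    have habs : |(A * exp (t • K)) x y| ≤ C := by
      rw [Matrix.mul_apply]
      refine (Finset.abs_sum_le_sum_abs _ _).trans ?_
      rw [hC]
      refine Finset.sum_le_sum fun z _ => ?_
      rw [abs_mul]
      have h1 : |(exp (t • K)) z y| ≤ 1 := by
        rw [abs_of_nonneg (exp_entry_nonneg hoff ht z y)]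
        exact exp_entry_le_one hoff hrow ht z y
      nlinarith [abs_nonneg (A x z)]
    have h2 : -(Real.exp (-(l * t)) * C) ≤ Real.exp (-(l * t)) * (A * exp (t • K)) x y := by
      have := neg_abs_le ((A * exp (t • K)) x y)
      nlinarith [Real.exp_nonneg (-(l * t))]
    calc -(Real.exp (-(l * t)) * C) ≤ Real.exp (-(l * t)) * (A * exp (t • K)) x y := h2
    _ ≤ (∫ s in (0:ℝ)..t, Real.exp (-(l * s)) * (exp (s • K)) x y)
        + Real.exp (-(l * t)) * (A * exp (t • K)) x y := by linarith
    _ = A x y := hid.symm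
  have htend : Tendsto (fun t : ℝ => -(Real.exp (-(l * t)) * C)) atTop (𝓝 0) := by
    have h1 : Tendsto (fun t : ℝ => l * t) atTop atTop :=
      Tendsto.const_mul_atTop hl tendsto_id
    have h2 := (Real.tendsto_exp_neg_atTop_nhds_zero.comp h1).mul_const C
    simpa using h2.neg
  have := le_of_tendsto htend hbound
  simpa using this

end Resolvent

section Killed

variable (R : V → V → ℝ) (B : Finset V)

/-- The rates into `B`, vanishing on `B`. -/
def rOut : V → ℝ := fun x => if x ∈ B then 0 else ∑ y ∈ B, R x y

variable {R B}

lemma rOut_nonneg (hR : ∀ x y, 0 ≤ R x y) (x : V) : 0 ≤ rOut R B x := by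
  unfold rOut; split
  · exact le_refl 0
  · exact Finset.sum_nonneg fun y _ => hR x y

lemma killed_offdiag (hR : ∀ x y, 0 ≤ R x y) : ∀ x y, x ≠ y → 0 ≤ killedGen R B x y := by
  intro x y hxy
  unfold killedGen
  by_cases hB : x ∈ B ∨ y ∈ B
  · rw [if_pos hB]
  · rw [if_neg hB, if_neg hxy]; exact hR x y

lemma killed_rowsum (hR : ∀ x y, 0 ≤ R x y) (hRdiag : ∀ x, R x x = 0) (x : V) :
    ∑ y, killedGen R B x y = -(rOut R B x) := by
  by_cases hx : x ∈ B
  · rw [show rOut R B x = 0 from if_pos hx]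
    rw [Finset.sum_eq_zero, neg_zero]
    intro y _
    unfold killedGen
    rw [if_pos (Or.inl hx)]
  · have hdec : ∀ y, killedGen R B x y
        = (if y ∈ B then 0 else R x y) + (if y = x then -(∑ z, R x z) - R x x else 0) := by
      intro y
      unfold killedGen
      rcases eq_or_ne y x with rfl | hyx
      · rw [if_neg (by simpa using hx), if_pos rfl, if_pos rfl, if_neg hx]
        ring
      · by_cases hyB : y ∈ B
        · rw [if_pos (Or.inr hyB), if_pos hyB, if_neg hyx, add_zero]
        · rw [if_neg (by simp [hx, hyB]), if_neg (Ne.symm hyx), if_neg hyB, if_neg hyx, add_zero]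
    rw [Finset.sum_congr rfl fun y _ => hdec y, Finset.sum_add_distrib]
    rw [Finset.sum_ite_eq' Finset.univ x (fun _ => -(∑ z, R x z) - R x x)]
    rw [if_pos (mem_univ x), hRdiag x, sub_zero]
    have h1 : ∑ y, (if y ∈ B then 0 else R x y) = ∑ y, R x y - ∑ y ∈ B, R x y := by
      rw [← Finset.sum_filter_add_sum_filter_not Finset.univ (fun y => y ∈ B) (fun y => R x y)]
      have e1 : ∑ y ∈ Finset.univ.filter (fun y => y ∈ B), R x y = ∑ y ∈ B, R x y := by
        apply Finset.sum_congr _ (fun _ _ => rfl)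
        ext y; simp
      have e2 : ∑ y, (if y ∈ B then 0 else R x y)
          = ∑ y ∈ Finset.univ.filter (fun y => ¬(y ∈ B)), R x y := by
        rw [Finset.sum_filter]
        apply Finset.sum_congr rfl
        intro y _
        by_cases hyB : y ∈ B <;> simp [hyB]
      rw [e2, e1]
      ring
    rw [h1]
    rw [show rOut R B x = ∑ y ∈ B, R x y from if_neg hx]
    ring

end Killed

section WProps

omit [DecidableEq V] in
lemma mulVec_apply' (M : Matrix V V ℝ) (v : V → ℝ) (x : V) :
    M.mulVec v x = ∑ y, M x y * v y := rfl

variable {R : V → V → ℝ} {B : Finset V} {l : ℝ}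

/-- The resolvent vector `w = (l - L_B)⁻¹ r_B`, whose entries are `E_x[e^{-l H_B}]`. -/
def resW (R : V → V → ℝ) (B : Finset V) (l : ℝ) : V → ℝ :=
  ((l • (1 : Matrix V V ℝ) - killedGen R B)⁻¹).mulVec (rOut R B)

lemma killed_apply_decomp {x : V} (hx : x ∉ B) (y : V) :
    killedGen R B x y
      = (if y ∈ B then 0 else R x y) + (if y = x then -(∑ z, R x z) - R x x else 0) := by
  unfold killedGen
  rcases eq_or_ne y x with rfl | hyx
  · rw [if_neg (by simpa using hx), if_pos rfl, if_pos rfl, if_neg hx]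
    ring
  · by_cases hyB : y ∈ B
    · rw [if_pos (Or.inr hyB), if_pos hyB, if_neg hyx, add_zero]
    · rw [if_neg (by simp [hx, hyB]), if_neg (Ne.symm hyx), if_neg hyB, if_neg hyx, add_zero]

variable (hR : ∀ x y, 0 ≤ R x y) (hRdiag : ∀ x, R x x = 0) (hl : 0 < l)

include hR hRdiag

lemma killed_hrow : ∀ x, ∑ y, killedGen R B x y ≤ 0 := by
  intro x
  rw [killed_rowsum hR hRdiag x]
  exact neg_nonpos.2 (rOut_nonneg hR x)

include hl

lemma resW_nonneg (x : V) : 0 ≤ resW R B l x := by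
  rw [resW, mulVec_apply']
  exact Finset.sum_nonneg fun y _ => mul_nonneg
    (resolvent_nonneg (killed_offdiag hR) (killed_hrow hR hRdiag) hl x y)
    (rOut_nonneg hR y)

lemma mulVec_resW :
    (l • (1 : Matrix V V ℝ) - killedGen R B).mulVec (resW R B l) = rOut R B := by
  rw [resW, Matrix.mulVec_mulVec,
    Matrix.mul_nonsing_inv _ ((Matrix.isUnit_iff_isUnit_det _).1
      (resolvent_isUnit (killed_offdiag hR) (killed_hrow hR hRdiag) hl)),
    Matrix.one_mulVec]

omit hR hRdiag hl in
lemma smul_one_sub_mulVec (v : V → ℝ) (x : V) :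
    (l • (1 : Matrix V V ℝ) - killedGen R B).mulVec v x
      = l * v x - ∑ y, killedGen R B x y * v y := by
  rw [Matrix.sub_mulVec, Matrix.smul_mulVec, Matrix.one_mulVec]
  rfl

lemma resW_le_one (x : V) : resW R B l x ≤ 1 := by
  set M : Matrix V V ℝ := l • (1 : Matrix V V ℝ) - killedGen R B with hM
  have hdet : IsUnit M.det := (Matrix.isUnit_iff_isUnit_det _).1
    (resolvent_isUnit (killed_offdiag hR) (killed_hrow hR hRdiag) hl)
  have hone : M.mulVec (fun _ => (1:ℝ)) = fun z => l + rOut R B z := by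
    funext z
    rw [hM, smul_one_sub_mulVec]
    simp only [mul_one]
    rw [killed_rowsum hR hRdiag z]
    ring
  have h2 : (M⁻¹).mulVec (fun z => l + rOut R B z) = fun _ => (1:ℝ) := by
    rw [← hone, Matrix.mulVec_mulVec, Matrix.nonsing_inv_mul _ hdet, Matrix.one_mulVec]
  have h3 : (1:ℝ) = ∑ y, M⁻¹ x y * (l + rOut R B y) := by
    have := congrFun h2 x
    rw [mulVec_apply'] at this
    exact this.symm
  have h4 : resW R B l x = ∑ y, M⁻¹ x y * rOut R B y := by rw [resW, ← hM, mulVec_apply']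
  have h5 : ∑ y, M⁻¹ x y * rOut R B y ≤ ∑ y, M⁻¹ x y * (l + rOut R B y) := by
    refine Finset.sum_le_sum fun y _ => ?_
    have hnn : 0 ≤ M⁻¹ x y := by
      rw [hM]
      exact resolvent_nonneg (killed_offdiag hR (B := B)) (killed_hrow hR hRdiag) hl x y
    nlinarith
  rw [h4, ← h3] at *
  linarith

lemma resW_eq_zero_on {x : V} (hx : x ∈ B) : resW R B l x = 0 := by
  have h1 := congrFun (mulVec_resW hR hRdiag hl (B := B)) x
  rw [smul_one_sub_mulVec] at h1
  have h2 : ∑ y, killedGen R B x y * resW R B l y = 0 := by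
    apply Finset.sum_eq_zero
    intro y _
    rw [show killedGen R B x y = 0 from by unfold killedGen; rw [if_pos (Or.inl hx)], zero_mul]
  rw [h2, show rOut R B x = 0 from if_pos hx, sub_zero] at h1
  exact (mul_eq_zero.1 h1).resolve_left hl.ne'

lemma gen_tilde {x : V} (hx : x ∉ B) :
    gen R (fun y => if y ∈ B then (1:ℝ) else resW R B l y) x = l * resW R B l x := by
  set w := resW R B l with hwdef
  have hw : l * w x - ∑ y, killedGen R B x y * w y = rOut R B x := by
    have := congrFun (mulVec_resW hR hRdiag hl (B := B)) x
    rwa [smul_one_sub_mulVec] at this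
  have hKsum : ∑ y, killedGen R B x y * w y
      = (∑ y, (if y ∈ B then 0 else R x y) * w y) - (∑ z, R x z) * w x := by
    rw [Finset.sum_congr rfl fun y (_ : y ∈ Finset.univ) => by
      rw [killed_apply_decomp hx y, add_mul]]
    rw [Finset.sum_add_distrib]
    have : ∑ y, (if y = x then -(∑ z, R x z) - R x x else 0) * w y
        = -(∑ z, R x z) * w x := by
      rw [Finset.sum_congr rfl fun y (_ : y ∈ Finset.univ) => by
        rw [show (if y = x then -(∑ z, R x z) - R x x else 0) * w y
          = (if y = x then (-(∑ z, R x z) - R x x) * w y else 0) from by split <;> simp]]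
      rw [Finset.sum_ite_eq' Finset.univ x (fun y => (-(∑ z, R x z) - R x x) * w y)]
      rw [if_pos (mem_univ x), hRdiag x]
      ring
    rw [this]
    ring
  have hgen : gen R (fun y => if y ∈ B then (1:ℝ) else w y) x
      = (∑ y, (if y ∈ B then 0 else R x y) * w y) + rOut R B x - (∑ y, R x y) * w x := by
    rw [gen]
    have hux : (if x ∈ B then (1:ℝ) else w x) = w x := if_neg hx
    rw [Finset.sum_congr rfl fun y (_ : y ∈ Finset.univ) => by
      rw [hux, mul_sub]]
    rw [Finset.sum_sub_distrib, ← Finset.sum_mul]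
    congr 1
    have : ∀ y, R x y * (if y ∈ B then (1:ℝ) else w y)
        = (if y ∈ B then 0 else R x y) * w y + (if y ∈ B then R x y else 0) := by
      intro y
      by_cases hyB : y ∈ B <;> simp [hyB]
    rw [Finset.sum_congr rfl fun y _ => this y, Finset.sum_add_distrib]
    congr 1
    rw [show rOut R B x = ∑ y ∈ B, R x y from if_neg hx]
    rw [Finset.sum_ite_mem, Finset.univ_inter]
  rw [hgen]
  linarith

end WProps

section HitBounds

variable {R : V → V → ℝ} {B : Finset V}
variable (hR : ∀ x y, 0 ≤ R x y) (hRdiag : ∀ x, R x x = 0)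

include hR hRdiag

lemma hit_eq_integral (x : V) (t : ℝ) :
    hitLE R B x t
      = ∫ s in (0:ℝ)..t, ∑ z, (exp (s • killedGen R B)) x z * rOut R B z := by
  set K := killedGen R B with hK
  have hderiv : ∀ s : ℝ, HasDerivAt (fun s : ℝ => ∑ y, (exp (s • K)) x y)
      (-∑ z, (exp (s • K)) x z * rOut R B z) s := by
    intro s
    have h1 : HasDerivAt (fun s : ℝ => ∑ y, (exp (s • K)) x y)
        (∑ y, (exp (s • K) * K) x y) s :=
      HasDerivAt.fun_sum fun y _ => hasDerivAt_exp_entry K x y s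
    have h2 : ∑ y, (exp (s • K) * K) x y = -∑ z, (exp (s • K)) x z * rOut R B z := by
      have e1 : ∑ y, (exp (s • K) * K) x y = ∑ z, (exp (s • K)) x z * ∑ y, K z y := by
        simp_rw [Matrix.mul_apply, Finset.mul_sum]
        rw [Finset.sum_comm]
      rw [e1, ← Finset.sum_neg_distrib]
      refine Finset.sum_congr rfl fun z _ => ?_
      rw [hK, killed_rowsum hR hRdiag z]
      ring
    exact h2 ▸ h1
  have hcont : Continuous (fun s : ℝ => ∑ z, (exp (s • K)) x z * rOut R B z) :=
    continuous_finset_sum _ fun z _ => (continuous_exp_entry K x z).mul continuous_const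
  have hftc := intervalIntegral.integral_eq_sub_of_hasDerivAt
    (f := fun s : ℝ => ∑ y, (exp (s • K)) x y)
    (fun s _ => hderiv s) ((hcont.neg).intervalIntegrable 0 t)
  rw [intervalIntegral.integral_neg] at hftc
  have h0 : ∑ y, (exp ((0:ℝ) • K)) x y = 1 := by
    simp [exp_zero, Matrix.one_apply, Finset.sum_ite_eq' (Finset.univ) x]
  have hftc' : -∫ s in (0:ℝ)..t, ∑ z, (exp (s • K)) x z * rOut R B z
      = (∑ y, (exp (t • K)) x y) - ∑ y, (exp ((0:ℝ) • K)) x y := hftc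
  rw [h0] at hftc'
  rw [hitLE]
  linarith

lemma hit_nonneg (x : V) {t : ℝ} (ht : 0 ≤ t) : 0 ≤ hitLE R B x t := by
  rw [hitLE]
  have := exp_rowsum_le_one (killed_offdiag hR (B := B)) (killed_hrow hR hRdiag) ht x
  linarith

lemma hit_le_resW (x : V) {t : ℝ} (ht : 0 < t) :
    hitLE R B x t ≤ Real.exp 1 * resW R B t⁻¹ x := by
  set K := killedGen R B with hK
  set l : ℝ := t⁻¹ with hldef
  have hl : 0 < l := inv_pos.2 ht
  have hoff := killed_offdiag hR (B := B)
  have hrow := killed_hrow hR hRdiag (B := B)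
  have key : Real.exp (-1) * hitLE R B x t ≤ resW R B l x := by
    have hterm : ∀ z, (∫ s in (0:ℝ)..t, Real.exp (-1) * (exp (s • K)) x z) * rOut R B z
        ≤ (l • (1 : Matrix V V ℝ) - K)⁻¹ x z * rOut R B z := by
      intro z
      refine mul_le_mul_of_nonneg_right ?_ (rOut_nonneg hR z)
      rw [resolvent_entry hoff hrow hl t x z]
      have hmono : (∫ s in (0:ℝ)..t, Real.exp (-1) * (exp (s • K)) x z)
          ≤ ∫ s in (0:ℝ)..t, Real.exp (-(l * s)) * (exp (s • K)) x z := by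
        refine intervalIntegral.integral_mono_on ht.le
          ((continuous_const.mul (continuous_exp_entry K x z)).intervalIntegrable 0 t)
          (((Real.continuous_exp.comp (continuous_const.mul continuous_id).neg).mul
            (continuous_exp_entry K x z)).intervalIntegrable 0 t) ?_
        intro s hs
        have h1 : -(1:ℝ) ≤ -(l * s) := by
          rw [neg_le_neg_iff, hldef]
          rw [inv_mul_le_iff₀ ht] -- l * s ≤ 1 ↔ ...
          simpa [one_mul] using hs.2
        have h2 : Real.exp (-1) ≤ Real.exp (-(l * s)) := Real.exp_le_exp.2 h1
        exact mul_le_mul_of_nonneg_right h2 (exp_entry_nonneg hoff hs.1 x z)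
      have hpos : 0 ≤ Real.exp (-(l * t)) * ((l • (1 : Matrix V V ℝ) - K)⁻¹ * exp (t • K)) x z := by
        refine mul_nonneg (Real.exp_nonneg _) ?_
        rw [Matrix.mul_apply]
        exact Finset.sum_nonneg fun u _ => mul_nonneg
          (resolvent_nonneg hoff hrow hl x u) (exp_entry_nonneg hoff ht.le u z)
      linarith
    have hsum : ∑ z, (∫ s in (0:ℝ)..t, Real.exp (-1) * (exp (s • K)) x z) * rOut R B z
        ≤ resW R B l x := by
      rw [resW, mulVec_apply']
      exact Finset.sum_le_sum fun z _ => hterm z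
    have hswap : Real.exp (-1) * hitLE R B x t
        = ∑ z, (∫ s in (0:ℝ)..t, Real.exp (-1) * (exp (s • K)) x z) * rOut R B z := by
      rw [hit_eq_integral hR hRdiag x t]
      rw [← intervalIntegral.integral_const_mul]
      rw [show (fun s => Real.exp (-1) * ∑ z, (exp (s • K)) x z * rOut R B z)
          = fun s => ∑ z, (Real.exp (-1) * (exp (s • K)) x z) * rOut R B z from by
        funext s; rw [Finset.mul_sum]; exact Finset.sum_congr rfl fun z _ => by ring]
      rw [intervalIntegral.integral_finsetSum (f := fun z s => Real.exp (-1) * (exp (s • K)) x z * rOut R B z) fun z _ =>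
        ((continuous_const.mul (continuous_exp_entry K x z)).mul
          continuous_const).intervalIntegrable 0 t]
      exact Finset.sum_congr rfl fun z _ => by
        rw [intervalIntegral.integral_mul_const]
    linarith [hswap ▸ hsum]
  have hexp : Real.exp 1 * Real.exp (-1) = 1 := by
    rw [← Real.exp_add]; norm_num
  have hepos : (0:ℝ) < Real.exp 1 := Real.exp_pos 1
  calc hitLE R B x t = (Real.exp 1 * Real.exp (-1)) * hitLE R B x t := by rw [hexp, one_mul]
  _ = Real.exp 1 * (Real.exp (-1) * hitLE R B x t) := by ring
  _ ≤ Real.exp 1 * resW R B l x := mul_le_mul_of_nonneg_left key hepos.le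

end HitBounds

section Adjoint

variable {R : V → V → ℝ} {π : V → ℝ}

/-- The adjoint (time-reversed) jump rates. -/
def Rstar (R : V → V → ℝ) (π : V → ℝ) : V → V → ℝ := fun x y => π y * R y x / π x

omit [DecidableEq V] in
lemma expand_weighted_gen (c f : V → ℝ) (x : V) :
    c x * gen R f x = (∑ y, c x * R x y * f y) - c x * f x * ∑ y, R x y := by
  rw [gen, Finset.mul_sum]
  have h : ∀ y, c x * (R x y * (f y - f x)) = c x * R x y * f y - c x * f x * R x y :=
    fun y => by ring
  rw [Finset.sum_congr rfl fun y _ => h y, Finset.sum_sub_distrib, ← Finset.mul_sum]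

variable (hR : ∀ x y, 0 ≤ R x y) (hRdiag : ∀ x, R x x = 0)
  (hπ : ∀ x, 0 < π x) (hstat : Stationary R π)

omit [Fintype V] [DecidableEq V] in
include hR hπ in
lemma Rstar_nonneg : ∀ x y, 0 ≤ Rstar R π x y := fun x y =>
  div_nonneg (mul_nonneg (hπ y).le (hR y x)) (hπ x).le

omit [Fintype V] [DecidableEq V] in
include hRdiag in
lemma Rstar_diag : ∀ x, Rstar R π x x = 0 := fun x => by
  rw [Rstar, hRdiag x, mul_zero, zero_div]

omit [DecidableEq V] in
include hπ hstat in
lemma Rstar_rowsum : ∀ x, ∑ z, Rstar R π x z = ∑ z, R x z := by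
  intro x
  have h1 : ∑ z, Rstar R π x z = (∑ z, π z * R z x) / π x := by
    rw [Finset.sum_div]; rfl
  rw [h1, hstat x, mul_div_cancel_left₀ _ (hπ x).ne']

omit [Fintype V] [DecidableEq V] in
include hπ in
lemma pi_mul_Rstar (x y : V) : π x * Rstar R π x y = π y * R y x := by
  rw [Rstar, mul_div_assoc']
  rw [mul_comm (π x) _, mul_div_assoc, div_self (hπ x).ne', mul_one]

omit [DecidableEq V] in
include hπ hstat in
lemma Rstar_stationary : Stationary (Rstar R π) π := by
  intro y
  have h1 : ∑ x, π x * Rstar R π x y = π y * ∑ x, R y x := by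
    rw [Finset.mul_sum]
    exact Finset.sum_congr rfl fun x _ => pi_mul_Rstar hπ x y
  rw [h1, Rstar_rowsum hπ hstat y]

omit [DecidableEq V] in
include hstat in
/-- Stationarity: the generator sums to zero against `π`. -/
lemma sum_pi_gen (f : V → ℝ) : ∑ x, π x * gen R f x = 0 := by
  rw [Finset.sum_congr rfl fun x _ => expand_weighted_gen π f x, Finset.sum_sub_distrib]
  rw [Finset.sum_comm, sub_eq_zero]
  have h1 : ∀ y, ∑ x, π x * R x y * f y = π y * f y * ∑ z, R y z := by
    intro y
    rw [← Finset.sum_mul, hstat y]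
    ring
  rw [Finset.sum_congr rfl fun y _ => h1 y]

omit [DecidableEq V] in
include hπ hstat in
/-- The adjoint relation between `gen R` and `gen (Rstar R π)`. -/
lemma adjoint_pairing (f g : V → ℝ) :
    ∑ x, π x * g x * gen R f x = ∑ x, π x * f x * gen (Rstar R π) g x := by
  have hL : ∀ x, π x * g x * gen R f x
      = (∑ y, π x * R x y * g x * f y) - π x * g x * f x * ∑ y, R x y := by
    intro x
    have := expand_weighted_gen (R := R) (fun z => π z * g z) f x
    rw [this]
    congr 1
    exact Finset.sum_congr rfl fun y _ => by ring
  have hRt : ∀ x, π x * f x * gen (Rstar R π) g x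
      = (∑ y, π y * R y x * f x * g y) - π x * g x * f x * ∑ y, R x y := by
    intro x
    have := expand_weighted_gen (R := Rstar R π) (fun z => π z * f z) g x
    rw [this, Rstar_rowsum hπ hstat x]
    congr 1
    · refine Finset.sum_congr rfl fun y _ => ?_
      have h2 : π x * Rstar R π x y = π y * R y x := pi_mul_Rstar hπ x y
      calc π x * f x * Rstar R π x y * g y = (π x * Rstar R π x y) * f x * g y := by ring
      _ = π y * R y x * f x * g y := by rw [h2]
    · ring
  rw [Finset.sum_congr rfl fun x _ => hL x, Finset.sum_congr rfl fun x _ => hRt x]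
  rw [Finset.sum_sub_distrib, Finset.sum_sub_distrib]
  congr 1
  rw [Finset.sum_comm]
  exact Finset.sum_congr rfl fun x _ => Finset.sum_congr rfl fun y _ => by ring

end Adjoint


section AdjPotential

variable {R : V → V → ℝ} {π : V → ℝ} {A B : Finset V} {e : ℝ}

/-- Rates of the adjoint chain into `A`, vanishing on `A ∪ B`. -/
def rIn (R : V → V → ℝ) (π : V → ℝ) (A B : Finset V) : V → ℝ :=
  fun x => if x ∈ A ∪ B then 0 else ∑ y ∈ A, Rstar R π x y

/-- The `e`-resolvent approximation of the adjoint equilibrium potential of `(A,B)`. -/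
def adjV (R : V → V → ℝ) (π : V → ℝ) (A B : Finset V) (e : ℝ) : V → ℝ :=
  ((e • (1 : Matrix V V ℝ) - killedGen (Rstar R π) (A ∪ B))⁻¹).mulVec (rIn R π A B)

/-- Its extension by the boundary values `1` on `A`, `0` on `B`. -/
def adjVt (R : V → V → ℝ) (π : V → ℝ) (A B : Finset V) (e : ℝ) : V → ℝ :=
  fun y => if y ∈ A then 1 else if y ∈ B then 0 else adjV R π A B e y

variable (hR : ∀ x y, 0 ≤ R x y) (hRdiag : ∀ x, R x x = 0)
  (hπ : ∀ x, 0 < π x) (hstat : Stationary R π) (he : 0 < e)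

include hR hπ in
lemma rIn_nonneg (x : V) : 0 ≤ rIn R π A B x := by
  rw [rIn]; split
  · exact le_refl 0
  · exact Finset.sum_nonneg fun y _ => Rstar_nonneg hR hπ x y

include hR hπ in
lemma rIn_le_rOut (x : V) : rIn R π A B x ≤ rOut (Rstar R π) (A ∪ B) x := by
  rw [rIn, rOut]
  split
  · exact le_refl 0
  · exact Finset.sum_le_sum_of_subset_of_nonneg Finset.subset_union_left
      (fun y _ _ => Rstar_nonneg hR hπ x y)

include hR hRdiag hπ hstat he

lemma mulVec_adjV :
    (e • (1 : Matrix V V ℝ) - killedGen (Rstar R π) (A ∪ B)).mulVec (adjV R π A B e)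
      = rIn R π A B := by
  rw [adjV, Matrix.mulVec_mulVec,
    Matrix.mul_nonsing_inv _ ((Matrix.isUnit_iff_isUnit_det _).1
      (resolvent_isUnit (killed_offdiag (Rstar_nonneg hR hπ))
        (killed_hrow (Rstar_nonneg hR hπ) (Rstar_diag hRdiag)) he)),
    Matrix.one_mulVec]

lemma adjV_nonneg (x : V) : 0 ≤ adjV R π A B e x := by
  rw [adjV, mulVec_apply']
  exact Finset.sum_nonneg fun y _ => mul_nonneg
    (resolvent_nonneg (killed_offdiag (Rstar_nonneg hR hπ))
      (killed_hrow (Rstar_nonneg hR hπ) (Rstar_diag hRdiag)) he x y)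
    (rIn_nonneg hR hπ y)

lemma adjV_le_one (x : V) : adjV R π A B e x ≤ 1 := by
  set Rs := Rstar R π with hRs
  set M : Matrix V V ℝ := e • (1 : Matrix V V ℝ) - killedGen Rs (A ∪ B) with hM
  have hsnn : ∀ x y, 0 ≤ Rs x y := Rstar_nonneg hR hπ
  have hsdiag : ∀ x, Rs x x = 0 := Rstar_diag hRdiag
  have hdet : IsUnit M.det := (Matrix.isUnit_iff_isUnit_det _).1
    (resolvent_isUnit (killed_offdiag hsnn) (killed_hrow hsnn hsdiag) he)
  have hone : M.mulVec (fun _ => (1:ℝ)) = fun z => e + rOut Rs (A ∪ B) z := by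
    funext z
    rw [hM, smul_one_sub_mulVec]
    simp only [mul_one]
    rw [killed_rowsum hsnn hsdiag z]
    ring
  have h2 : (M⁻¹).mulVec (fun z => e + rOut Rs (A ∪ B) z) = fun _ => (1:ℝ) := by
    rw [← hone, Matrix.mulVec_mulVec, Matrix.nonsing_inv_mul _ hdet, Matrix.one_mulVec]
  have h3 : (1:ℝ) = ∑ y, M⁻¹ x y * (e + rOut Rs (A ∪ B) y) := by
    have := congrFun h2 x
    rw [mulVec_apply'] at this
    exact this.symm
  have h4 : adjV R π A B e x = ∑ y, M⁻¹ x y * rIn R π A B y := by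
    rw [adjV, ← hRs, ← hM, mulVec_apply']
  have h5 : ∑ y, M⁻¹ x y * rIn R π A B y ≤ ∑ y, M⁻¹ x y * (e + rOut Rs (A ∪ B) y) := by
    refine Finset.sum_le_sum fun y _ => ?_
    have hnn : 0 ≤ M⁻¹ x y := by
      rw [hM]
      exact resolvent_nonneg (killed_offdiag hsnn) (killed_hrow hsnn hsdiag) he x y
    have hle : rIn R π A B y ≤ e + rOut Rs (A ∪ B) y := by
      have := rIn_le_rOut hR hπ (A := A) (B := B) y
      rw [← hRs] at this
      linarith
    nlinarith
  rw [h4, ← h3] at *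
  linarith

lemma adjV_zero_on {x : V} (hx : x ∈ A ∪ B) : adjV R π A B e x = 0 := by
  have h1 := congrFun (mulVec_adjV hR hRdiag hπ hstat he (A := A) (B := B)) x
  rw [smul_one_sub_mulVec] at h1
  have h2 : ∑ y, killedGen (Rstar R π) (A ∪ B) x y * adjV R π A B e y = 0 := by
    apply Finset.sum_eq_zero
    intro y _
    rw [show killedGen (Rstar R π) (A ∪ B) x y = 0 from by
      unfold killedGen; rw [if_pos (Or.inl hx)], zero_mul]
  rw [h2, show rIn R π A B x = 0 from if_pos hx, sub_zero] at h1
  exact (mul_eq_zero.1 h1).resolve_left he.ne'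

lemma adjVt_nonneg (x : V) : 0 ≤ adjVt R π A B e x := by
  rw [adjVt]
  split
  · norm_num
  split
  · norm_num
  · exact adjV_nonneg hR hRdiag hπ hstat he x

lemma adjVt_le_one (x : V) : adjVt R π A B e x ≤ 1 := by
  rw [adjVt]
  split
  · norm_num
  split
  · norm_num
  · exact adjV_le_one hR hRdiag hπ hstat he x

lemma adjVt_eq_adjV {x : V} (hxA : x ∉ A) (hxB : x ∉ B) :
    adjVt R π A B e x = adjV R π A B e x := by
  rw [adjVt, if_neg hxA, if_neg hxB]

lemma gen_adjVt_interior {x : V} (hx : x ∉ A ∪ B) :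
    gen (Rstar R π) (adjVt R π A B e) x = e * adjV R π A B e x := by
  set Rs := Rstar R π with hRs
  set v := adjV R π A B e with hv
  have hsnn : ∀ x y, 0 ≤ Rs x y := Rstar_nonneg hR hπ
  have hsdiag : ∀ x, Rs x x = 0 := Rstar_diag hRdiag
  have hw : e * v x - ∑ y, killedGen Rs (A ∪ B) x y * v y = rIn R π A B x := by
    have := congrFun (mulVec_adjV hR hRdiag hπ hstat he (A := A) (B := B)) x
    rwa [smul_one_sub_mulVec] at this
  have hKsum : ∑ y, killedGen Rs (A ∪ B) x y * v y
      = (∑ y, (if y ∈ A ∪ B then 0 else Rs x y) * v y) - (∑ z, Rs x z) * v x := by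
    rw [Finset.sum_congr rfl fun y (_ : y ∈ Finset.univ) => by
      rw [killed_apply_decomp hx y, add_mul]]
    rw [Finset.sum_add_distrib]
    have h6 : ∑ y, (if y = x then -(∑ z, Rs x z) - Rs x x else 0) * v y
        = -(∑ z, Rs x z) * v x := by
      rw [Finset.sum_congr rfl fun y (_ : y ∈ Finset.univ) => by
        rw [show (if y = x then -(∑ z, Rs x z) - Rs x x else 0) * v y
          = (if y = x then (-(∑ z, Rs x z) - Rs x x) * v y else 0) from by split <;> simp]]
      rw [Finset.sum_ite_eq' Finset.univ x (fun y => (-(∑ z, Rs x z) - Rs x x) * v y)]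
      rw [if_pos (mem_univ x), hsdiag x]
      ring
    rw [h6]
    ring
  have hxA : x ∉ A := fun hc => hx (Finset.mem_union_left _ hc)
  have hxB : x ∉ B := fun hc => hx (Finset.mem_union_right _ hc)
  have hgen : gen Rs (adjVt R π A B e) x
      = (∑ y, (if y ∈ A ∪ B then 0 else Rs x y) * v y) + rIn R π A B x
        - (∑ y, Rs x y) * v x := by
    rw [gen]
    have hux : adjVt R π A B e x = v x := adjVt_eq_adjV hR hRdiag hπ hstat he hxA hxB
    rw [Finset.sum_congr rfl fun y (_ : y ∈ Finset.univ) => by rw [hux, mul_sub]]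
    rw [Finset.sum_sub_distrib, ← Finset.sum_mul]
    congr 1
    have h7 : ∀ y, Rs x y * adjVt R π A B e y
        = (if y ∈ A ∪ B then 0 else Rs x y) * v y + (if y ∈ A then Rs x y else 0) := by
      intro y
      rw [adjVt]
      by_cases hyA : y ∈ A
      · simp [hyA, Finset.mem_union_left _ hyA]
      · by_cases hyB : y ∈ B
        · simp [hyA, hyB, Finset.mem_union_right _ hyB]
        · simp [hyA, hyB, show y ∉ A ∪ B from by simp [hyA, hyB], hv]
    rw [Finset.sum_congr rfl fun y _ => h7 y, Finset.sum_add_distrib]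
    congr 1
    rw [show rIn R π A B x = ∑ y ∈ A, Rs x y from if_neg hx]
    rw [Finset.sum_ite_mem, Finset.univ_inter]
  rw [hgen]
  linarith

lemma gen_adjVt_nonpos {x : V} (hxA : x ∈ A) :
    gen (Rstar R π) (adjVt R π A B e) x ≤ 0 := by
  rw [gen]
  refine Finset.sum_nonpos fun y _ => ?_
  have h1 : adjVt R π A B e x = 1 := if_pos hxA
  have h2 : adjVt R π A B e y ≤ 1 := adjVt_le_one hR hRdiag hπ hstat he y
  have h3 : 0 ≤ Rstar R π x y := Rstar_nonneg hR hπ x y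
  nlinarith

end AdjPotential

section Capacity

lemma sum_split (A B : Finset V) (hAB : Disjoint A B) (f : V → ℝ) :
    ∑ x, f x = (∑ x ∈ A, f x) + (∑ x ∈ B, f x) + ∑ x ∈ Finset.univ \ (A ∪ B), f x := by
  rw [← Finset.sum_union hAB, ← Finset.sum_union (Finset.disjoint_sdiff)]
  rw [Finset.union_sdiff_of_subset (Finset.subset_univ _)]

variable {R : V → V → ℝ} {π : V → ℝ}
variable (hR : ∀ x y, 0 ≤ R x y) (hRdiag : ∀ x, R x x = 0)
  (hπ : ∀ x, 0 < π x) (hstat : Stationary R π)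

include hR hRdiag hπ hstat

lemma cap_bound_eps {A B : Finset V} (hAB : Disjoint A B) {h : V → ℝ}
    (hpot : IsEqPotential R A B h) {x0 : V} (hx0 : x0 ∈ A) {l e : ℝ}
    (hl : 0 < l) (he : 0 < e) :
    l * (π x0 * resW R B l x0) ≤ capFor R π A h + e * ∑ x, π x * |h x| := by
  classical
  set Rs := Rstar R π with hRsdef
  set w := resW R B l with hwdef
  set ut : V → ℝ := fun y => if y ∈ B then 1 else w y with hutdef
  set v := adjV R π A B e with hvdef
  set vt := adjVt R π A B e with hvtdef
  set W : Finset V := Finset.univ \ (A ∪ B) with hWdef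
  have hWmem : ∀ x ∈ W, x ∉ A ∪ B := fun x hx => (Finset.mem_sdiff.1 hx).2
  have hvtA : ∀ x ∈ A, vt x = 1 := fun x hx => if_pos hx
  have hvtB : ∀ x ∈ B, vt x = 0 := by
    intro x hx
    rw [hvtdef, adjVt, if_neg (fun hc => (Finset.disjoint_left.1 hAB hc) hx), if_pos hx]
  have hgenW : ∀ x ∈ W, gen Rs vt x = e * v x := fun x hx =>
    gen_adjVt_interior hR hRdiag hπ hstat he (hWmem x hx)
  have hgennpA : ∀ x ∈ A, gen Rs vt x ≤ 0 := fun x hx =>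
    gen_adjVt_nonpos hR hRdiag hπ hstat he hx
  have hutA : ∀ x ∈ A, ut x = w x := fun x hx =>
    if_neg (fun hc => (Finset.disjoint_left.1 hAB hx) hc)
  have hutB : ∀ x ∈ B, ut x = 1 := fun x hx => if_pos hx
  have hutW : ∀ x ∈ W, ut x = w x := fun x hx =>
    if_neg (fun hc => hWmem x hx (Finset.mem_union_right _ hc))
  have hvtW : ∀ x ∈ W, vt x = v x := by
    intro x hx
    have hm := hWmem x hx
    exact adjVt_eq_adjV hR hRdiag hπ hstat he
      (fun hc => hm (Finset.mem_union_left _ hc)) (fun hc => hm (Finset.mem_union_right _ hc))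
  have hgenut : ∀ x, x ∉ B → gen R ut x = l * w x := fun x hx =>
    gen_tilde hR hRdiag hl hx
  have hv0 : ∀ x, 0 ≤ v x := adjV_nonneg hR hRdiag hπ hstat he
  have hv1 : ∀ x, v x ≤ 1 := adjV_le_one hR hRdiag hπ hstat he
  have hw0 : ∀ x, 0 ≤ w x := resW_nonneg hR hRdiag hl
  have hw1 : ∀ x, w x ≤ 1 := resW_le_one hR hRdiag hl
  set S1 := ∑ x ∈ A, π x * gen Rs vt x with hS1def
  set S2 := ∑ x ∈ B, π x * gen Rs vt x with hS2def
  set S3 := ∑ x ∈ A, π x * w x * gen Rs vt x with hS3def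
  -- I1 : total stationarity
  have I1 : S1 + S2 + e * ∑ x ∈ W, π x * v x = 0 := by
    have h0 := sum_pi_gen (R := Rs) (π := π) (Rstar_stationary hπ hstat) vt
    rw [sum_split A B hAB (fun x => π x * gen Rs vt x)] at h0
    have hWp : ∑ x ∈ W, π x * gen Rs vt x = e * ∑ x ∈ W, π x * v x := by
      rw [Finset.mul_sum]
      exact Finset.sum_congr rfl fun x hx => by rw [hgenW x hx]; ring
    rw [hWp] at h0
    linarith
  -- I2 : pairing with h
  have I2 : -(capFor R π A h) = S1 + e * ∑ x ∈ W, π x * h x * v x := by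
    have hp := adjoint_pairing hπ hstat h vt
    have hLs : ∑ x, π x * vt x * gen R h x = -(capFor R π A h) := by
      rw [sum_split A B hAB]
      have hA' : ∑ x ∈ A, π x * vt x * gen R h x = -(capFor R π A h) := by
        rw [capFor, ← Finset.sum_neg_distrib]
        exact Finset.sum_congr rfl fun x hx => by rw [hvtA x hx]; ring
      have hB' : ∑ x ∈ B, π x * vt x * gen R h x = 0 :=
        Finset.sum_eq_zero fun x hx => by rw [hvtB x hx]; ring
      have hW' : ∑ x ∈ W, π x * vt x * gen R h x = 0 :=
        Finset.sum_eq_zero fun x hx => by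
          rw [hpot.2.2 x (fun hc => hWmem x hx (Finset.mem_union_left _ hc))
            (fun hc => hWmem x hx (Finset.mem_union_right _ hc))]
          ring
      rw [hA', hB', hW']; ring
    have hRs' : ∑ x, π x * h x * gen Rs vt x = S1 + e * ∑ x ∈ W, π x * h x * v x := by
      rw [sum_split A B hAB]
      have hA' : ∑ x ∈ A, π x * h x * gen Rs vt x = S1 :=
        Finset.sum_congr rfl fun x hx => by rw [hpot.1 x hx]; ring
      have hB' : ∑ x ∈ B, π x * h x * gen Rs vt x = 0 :=
        Finset.sum_eq_zero fun x hx => by rw [hpot.2.1 x hx]; ring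
      have hW' : ∑ x ∈ W, π x * h x * gen Rs vt x = e * ∑ x ∈ W, π x * h x * v x := by
        rw [Finset.mul_sum]
        exact Finset.sum_congr rfl fun x hx => by rw [hgenW x hx]; ring
      rw [hA', hB', hW']; ring
    rw [hLs, hRs'] at hp
    exact hp
  -- I3 : pairing with ut
  have I3 : l * ∑ x ∈ A, π x * w x + l * ∑ x ∈ W, π x * v x * w x
      = S3 + S2 + e * ∑ x ∈ W, π x * w x * v x := by
    have hp := adjoint_pairing hπ hstat ut vt
    have hLs : ∑ x, π x * vt x * gen R ut x
        = l * ∑ x ∈ A, π x * w x + l * ∑ x ∈ W, π x * v x * w x := by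
      rw [sum_split A B hAB]
      have hA' : ∑ x ∈ A, π x * vt x * gen R ut x = l * ∑ x ∈ A, π x * w x := by
        rw [Finset.mul_sum]
        refine Finset.sum_congr rfl fun x hx => ?_
        rw [hvtA x hx, hgenut x (fun hc => (Finset.disjoint_left.1 hAB hx) hc)]
        ring
      have hB' : ∑ x ∈ B, π x * vt x * gen R ut x = 0 :=
        Finset.sum_eq_zero fun x hx => by rw [hvtB x hx]; ring
      have hW' : ∑ x ∈ W, π x * vt x * gen R ut x = l * ∑ x ∈ W, π x * v x * w x := by
        rw [Finset.mul_sum]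
        refine Finset.sum_congr rfl fun x hx => ?_
        rw [hvtW x hx, hgenut x (fun hc => hWmem x hx (Finset.mem_union_right _ hc))]
        ring
      rw [hA', hB', hW']
      ring
    have hRs' : ∑ x, π x * ut x * gen Rs vt x = S3 + S2 + e * ∑ x ∈ W, π x * w x * v x := by
      rw [sum_split A B hAB]
      have hA' : ∑ x ∈ A, π x * ut x * gen Rs vt x = S3 :=
        Finset.sum_congr rfl fun x hx => by rw [hutA x hx]
      have hB' : ∑ x ∈ B, π x * ut x * gen Rs vt x = S2 :=
        Finset.sum_congr rfl fun x hx => by rw [hutB x hx]; ring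
      have hW' : ∑ x ∈ W, π x * ut x * gen Rs vt x = e * ∑ x ∈ W, π x * w x * v x := by
        rw [Finset.mul_sum]
        refine Finset.sum_congr rfl fun x hx => ?_
        rw [hutW x hx, hgenW x hx]
        ring
      rw [hA', hB', hW']
    rw [hLs, hRs'] at hp
    exact hp
  -- bounds
  have hb1 : l * (π x0 * w x0) ≤ l * ∑ x ∈ A, π x * w x := by
    refine mul_le_mul_of_nonneg_left ?_ hl.le
    exact Finset.single_le_sum (f := fun x => π x * w x)
      (fun x _ => mul_nonneg (hπ x).le (hw0 x)) hx0
  have hb2 : 0 ≤ l * ∑ x ∈ W, π x * v x * w x :=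
    mul_nonneg hl.le (Finset.sum_nonneg fun x _ =>
      mul_nonneg (mul_nonneg (hπ x).le (hv0 x)) (hw0 x))
  have hb3 : S3 ≤ 0 :=
    Finset.sum_nonpos fun x hx => mul_nonpos_of_nonneg_of_nonpos
      (mul_nonneg (hπ x).le (hw0 x)) (hgennpA x hx)
  have hb5 : (∑ x ∈ W, π x * h x * v x) - (∑ x ∈ W, π x * v x) + (∑ x ∈ W, π x * w x * v x)
      ≤ ∑ x, π x * |h x| := by
    have hcomb : (∑ x ∈ W, π x * h x * v x) - (∑ x ∈ W, π x * v x)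
        + (∑ x ∈ W, π x * w x * v x)
        = ∑ x ∈ W, (π x * h x * v x - π x * v x + π x * w x * v x) := by
      rw [Finset.sum_add_distrib, Finset.sum_sub_distrib]
    rw [hcomb]
    calc ∑ x ∈ W, (π x * h x * v x - π x * v x + π x * w x * v x)
        ≤ ∑ x ∈ W, π x * |h x| := by
          refine Finset.sum_le_sum fun x _ => ?_
          have t1 : 0 ≤ (1 - v x) * |h x| := mul_nonneg (by linarith [hv1 x]) (abs_nonneg _)
          have t2 : 0 ≤ v x * (1 - w x) := mul_nonneg (hv0 x) (by linarith [hw1 x])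
          have t3 : 0 ≤ v x * (|h x| - h x) :=
            mul_nonneg (hv0 x) (by linarith [le_abs_self (h x)])
          have e1 : h x * v x - v x + w x * v x ≤ |h x| := by nlinarith
          calc π x * h x * v x - π x * v x + π x * w x * v x
              = π x * (h x * v x - v x + w x * v x) := by ring
          _ ≤ π x * |h x| := mul_le_mul_of_nonneg_left e1 (hπ x).le
    _ ≤ ∑ x, π x * |h x| :=
        Finset.sum_le_sum_of_subset_of_nonneg (Finset.subset_univ W)
          (fun x _ _ => mul_nonneg (hπ x).le (abs_nonneg _))
  -- assemble
  have hS2eq : S2 = capFor R π A h + e * (∑ x ∈ W, π x * h x * v x)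
      - e * ∑ x ∈ W, π x * v x := by linarith
  have hchain : l * (π x0 * w x0) ≤ capFor R π A h
      + e * ((∑ x ∈ W, π x * h x * v x) - (∑ x ∈ W, π x * v x)
        + (∑ x ∈ W, π x * w x * v x)) := by
    have := I3
    nlinarith [hb1, hb2, hb3]
  calc l * (π x0 * w x0) ≤ capFor R π A h
      + e * ((∑ x ∈ W, π x * h x * v x) - (∑ x ∈ W, π x * v x)
        + (∑ x ∈ W, π x * w x * v x)) := hchain
  _ ≤ capFor R π A h + e * ∑ x, π x * |h x| := by
      have := mul_le_mul_of_nonneg_left hb5 he.le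
      linarith

lemma capFor_nonneg_eps {A B : Finset V} (hAB : Disjoint A B) {h : V → ℝ}
    (hpot : IsEqPotential R A B h) {e : ℝ} (he : 0 < e) :
    -(e * ∑ x, π x * |h x|) ≤ capFor R π A h := by
  classical
  set Rs := Rstar R π with hRsdef
  set v := adjV R π A B e with hvdef
  set vt := adjVt R π A B e with hvtdef
  set W : Finset V := Finset.univ \ (A ∪ B) with hWdef
  have hWmem : ∀ x ∈ W, x ∉ A ∪ B := fun x hx => (Finset.mem_sdiff.1 hx).2
  have hvtA : ∀ x ∈ A, vt x = 1 := fun x hx => if_pos hx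
  have hvtB : ∀ x ∈ B, vt x = 0 := by
    intro x hx
    rw [hvtdef, adjVt, if_neg (fun hc => (Finset.disjoint_left.1 hAB hc) hx), if_pos hx]
  have hgenW : ∀ x ∈ W, gen Rs vt x = e * v x := fun x hx =>
    gen_adjVt_interior hR hRdiag hπ hstat he (hWmem x hx)
  have hv0 : ∀ x, 0 ≤ v x := adjV_nonneg hR hRdiag hπ hstat he
  have hv1 : ∀ x, v x ≤ 1 := adjV_le_one hR hRdiag hπ hstat he
  set S1 := ∑ x ∈ A, π x * gen Rs vt x with hS1def
  have I2 : -(capFor R π A h) = S1 + e * ∑ x ∈ W, π x * h x * v x := by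
    have hp := adjoint_pairing hπ hstat h vt
    have hLs : ∑ x, π x * vt x * gen R h x = -(capFor R π A h) := by
      rw [sum_split A B hAB]
      have hA' : ∑ x ∈ A, π x * vt x * gen R h x = -(capFor R π A h) := by
        rw [capFor, ← Finset.sum_neg_distrib]
        exact Finset.sum_congr rfl fun x hx => by rw [hvtA x hx]; ring
      have hB' : ∑ x ∈ B, π x * vt x * gen R h x = 0 :=
        Finset.sum_eq_zero fun x hx => by rw [hvtB x hx]; ring
      have hW' : ∑ x ∈ W, π x * vt x * gen R h x = 0 :=
        Finset.sum_eq_zero fun x hx => by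
          rw [hpot.2.2 x (fun hc => hWmem x hx (Finset.mem_union_left _ hc))
            (fun hc => hWmem x hx (Finset.mem_union_right _ hc))]
          ring
      rw [hA', hB', hW']; ring
    have hRs' : ∑ x, π x * h x * gen Rs vt x = S1 + e * ∑ x ∈ W, π x * h x * v x := by
      rw [sum_split A B hAB]
      have hA' : ∑ x ∈ A, π x * h x * gen Rs vt x = S1 :=
        Finset.sum_congr rfl fun x hx => by rw [hpot.1 x hx]; ring
      have hB' : ∑ x ∈ B, π x * h x * gen Rs vt x = 0 :=
        Finset.sum_eq_zero fun x hx => by rw [hpot.2.1 x hx]; ring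
      have hW' : ∑ x ∈ W, π x * h x * gen Rs vt x = e * ∑ x ∈ W, π x * h x * v x := by
        rw [Finset.mul_sum]
        exact Finset.sum_congr rfl fun x hx => by rw [hgenW x hx]; ring
      rw [hA', hB', hW']; ring
    rw [hLs, hRs'] at hp
    exact hp
  have hS1np : S1 ≤ 0 :=
    Finset.sum_nonpos fun x hx => mul_nonpos_of_nonneg_of_nonpos (hπ x).le
      (gen_adjVt_nonpos hR hRdiag hπ hstat he hx)
  have hWb : ∑ x ∈ W, π x * h x * v x ≤ ∑ x, π x * |h x| := by
    calc ∑ x ∈ W, π x * h x * v x ≤ ∑ x ∈ W, π x * |h x| := by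
          refine Finset.sum_le_sum fun x _ => ?_
          have t3 : 0 ≤ v x * (|h x| - h x) :=
            mul_nonneg (hv0 x) (by linarith [le_abs_self (h x)])
          have t1 : 0 ≤ (1 - v x) * |h x| := mul_nonneg (by linarith [hv1 x]) (abs_nonneg _)
          have e1 : h x * v x ≤ |h x| := by nlinarith
          calc π x * h x * v x = π x * (h x * v x) := by ring
          _ ≤ π x * |h x| := mul_le_mul_of_nonneg_left e1 (hπ x).le
    _ ≤ ∑ x, π x * |h x| :=
        Finset.sum_le_sum_of_subset_of_nonneg (Finset.subset_univ W)
          (fun x _ _ => mul_nonneg (hπ x).le (abs_nonneg _))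
  nlinarith [mul_le_mul_of_nonneg_left hWb he.le]

lemma capFor_nonneg {A B : Finset V} (hAB : Disjoint A B) {h : V → ℝ}
    (hpot : IsEqPotential R A B h) : 0 ≤ capFor R π A h := by
  set C := ∑ x, π x * |h x| with hC
  have hCnn : 0 ≤ C := Finset.sum_nonneg fun x _ => mul_nonneg (hπ x).le (abs_nonneg _)
  have hεbound : ∀ ε : ℝ, 0 < ε → 0 ≤ capFor R π A h + ε := by
    intro ε hε
    have heC : (0:ℝ) < C + 1 := by linarith
    have he : 0 < ε / (C + 1) := div_pos hε heC
    have hkey := capFor_nonneg_eps hR hRdiag hπ hstat hAB hpot he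
    have hmul : (ε / (C + 1)) * (C + 1) = ε := div_mul_cancel₀ _ heC.ne'
    have : (ε / (C + 1)) * C ≤ ε := by nlinarith
    rw [← hC] at hkey
    linarith
  by_contra hneg
  push_neg at hneg
  have := hεbound (-(capFor R π A h) / 2) (by linarith)
  linarith

lemma cap_bound {A B : Finset V} (hAB : Disjoint A B) {h : V → ℝ}
    (hpot : IsEqPotential R A B h) {x0 : V} (hx0 : x0 ∈ A) {l : ℝ} (hl : 0 < l) :
    l * (π x0 * resW R B l x0) ≤ capFor R π A h := by
  set C := ∑ x, π x * |h x| with hC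
  have hCnn : 0 ≤ C := Finset.sum_nonneg fun x _ => mul_nonneg (hπ x).le (abs_nonneg _)
  refine le_of_forall_pos_le_add fun ε hε => ?_
  have heC : (0:ℝ) < C + 1 := by linarith
  have he : 0 < ε / (C + 1) := div_pos hε heC
  have hkey := cap_bound_eps hR hRdiag hπ hstat hAB hpot hx0 hl he
  have hmul : (ε / (C + 1)) * (C + 1) = ε := div_mul_cancel₀ _ heC.ne'
  have hle : (ε / (C + 1)) * C ≤ ε := by nlinarith
  rw [← hC] at hkey
  linarith

end Capacity

end Stmt18Aux
end AuxDev

/-- wells `𝒱 i` with capacities defining the time scale `θₙ` by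
`θₙ⁻¹ = ∑_i Cap_n(𝒱 i, 𝒱̆ i)/πₙ(𝒱 i)`.  If `liminf_n πₙ(x)/πₙ(𝒱 j) > 0` on each well
and `βₙ/θₙ → 0`, then `P^n_x[H_{𝒱̆ j} < βₙ] → 0` for every `x ∈ 𝒱 j`. -/
theorem stmt18 {V : Type*} [Fintype V] [DecidableEq V]
    {ι : Type*} [Fintype ι] [DecidableEq ι]
    (Rn : ℕ → V → V → ℝ) (πn : ℕ → V → ℝ)
    (hRnn : ∀ n x y, 0 ≤ Rn n x y) (hRdiag : ∀ n x, Rn n x x = 0)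
    (hirr : ∀ n, Irred (Rn n))
    (hπpos : ∀ n x, 0 < πn n x) (hstat : ∀ n, Stationary (Rn n) (πn n))
    (𝒱 : ι → Finset V) (h𝒱ne : ∀ i, (𝒱 i).Nonempty)
    (h𝒱disj : ∀ i k, i ≠ k → Disjoint (𝒱 i) (𝒱 k))
    -- the equilibrium potentials defining the capacities `Cap_n(𝒱 i, 𝒱̆ i)`:
    (h : ℕ → ι → V → ℝ)
    (hpot : ∀ n i, IsEqPotential (Rn n) (𝒱 i)
      ((Finset.univ.erase i).biUnion 𝒱) (h n i))
    (θ : ℕ → ℝ) (hθpos : ∀ n, 0 < θ n)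
    (hθ : ∀ n, (θ n)⁻¹ =
      ∑ i, capFor (Rn n) (πn n) (𝒱 i) (h n i) / ∑ x ∈ 𝒱 i, πn n x)
    -- `liminf_n πₙ(x)/πₙ(𝒱 j) > 0`:
    (hratio : ∀ j, ∀ x ∈ 𝒱 j, ∃ c : ℝ, 0 < c ∧
      ∀ᶠ n in atTop, c ≤ πn n x / ∑ z ∈ 𝒱 j, πn n z)
    (β : ℕ → ℝ) (hβnn : ∀ n, 0 ≤ β n)
    (hβθ : Tendsto (fun n => β n / θ n) atTop (𝓝 0)) :
    ∀ j, ∀ x ∈ 𝒱 j,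
      Tendsto (fun n => hitLE (Rn n) ((Finset.univ.erase j).biUnion 𝒱) x (β n))
        atTop (𝓝 0) := by
  classical
  intro j x hxj
  set B : Finset V := (Finset.univ.erase j).biUnion 𝒱 with hBdef
  have hdisj' : ∀ i : ι, Disjoint (𝒱 i) ((Finset.univ.erase i).biUnion 𝒱) := by
    intro i
    rw [Finset.disjoint_left]
    intro a ha hc
    obtain ⟨k, hk, hak⟩ := Finset.mem_biUnion.1 hc
    exact (Finset.disjoint_left.1 (h𝒱disj i k (Ne.symm (Finset.ne_of_mem_erase hk))) ha) hak
  obtain ⟨c, hcpos, hcev⟩ := hratio j x hxj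
  have hπsum : ∀ n, 0 < ∑ z ∈ 𝒱 j, πn n z :=
    fun n => Finset.sum_pos (fun z _ => hπpos n z) ⟨x, hxj⟩
  have key : ∀ n, hitLE (Rn n) B x (β n)
      ≤ Real.exp 1 * ((β n / θ n) * ((∑ z ∈ 𝒱 j, πn n z) / πn n x)) := by
    intro n
    rcases eq_or_lt_of_le (hβnn n) with h0 | hpos
    · have hone : ∑ y, (NormedSpace.exp ((0:ℝ) • killedGen (Rn n) B)) x y = 1 := by
        simp [NormedSpace.exp_zero, Matrix.one_apply, Finset.sum_ite_eq' (Finset.univ) x]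
      rw [← h0, hitLE, hone, zero_div, zero_mul, mul_zero, sub_self]
    · have hb : 0 < β n := hpos
      have hl : 0 < (β n)⁻¹ := inv_pos.2 hb
      have h1 := Stmt18Aux.hit_le_resW (hRnn n) (hRdiag n) (B := B) x hb
      have h2 := Stmt18Aux.cap_bound (hRnn n) (hRdiag n) (hπpos n) (hstat n)
        (hdisj' j) (hpot n j) hxj hl
      set a := Stmt18Aux.resW (Rn n) B (β n)⁻¹ x with hadef
      set p := πn n x with hpdef
      set cap := capFor (Rn n) (πn n) (𝒱 j) (h n j) with hcapdef
      set S := ∑ z ∈ 𝒱 j, πn n z with hSdef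
      have hp : 0 < p := hπpos n x
      have h3 : cap ≤ (θ n)⁻¹ * S := by
        have hsingle : cap / S ≤ (θ n)⁻¹ := by
          rw [hθ n]
          refine Finset.single_le_sum (f := fun i =>
            capFor (Rn n) (πn n) (𝒱 i) (h n i) / ∑ z ∈ 𝒱 i, πn n z) ?_ (mem_univ j)
          intro i _
          refine div_nonneg ?_ (Finset.sum_pos (fun z _ => hπpos n z) (h𝒱ne i)).le
          exact Stmt18Aux.capFor_nonneg (hRnn n) (hRdiag n) (hπpos n) (hstat n)
            (hdisj' i) (hpot n i)
        have h4 := (div_le_iff₀ (hπsum n)).1 hsingle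
        linarith
      have h2' : p * a ≤ β n * cap := by
        have hmul := mul_le_mul_of_nonneg_left h2 hb.le
        rw [← mul_assoc, mul_inv_cancel₀ hb.ne', one_mul] at hmul
        exact hmul
      have ha1 : a ≤ β n * cap / p := (le_div_iff₀ hp).2 (by linarith [h2'])
      have ha2 : β n * cap / p ≤ β n * ((θ n)⁻¹ * S) / p := by gcongr
      have ha3 : β n * ((θ n)⁻¹ * S) / p = (β n / θ n) * (S / p) := by
        rw [div_eq_mul_inv, div_eq_mul_inv, div_eq_mul_inv]
        ring
      calc hitLE (Rn n) B x (β n) ≤ Real.exp 1 * a := h1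
      _ ≤ Real.exp 1 * ((β n / θ n) * (S / p)) := by
          refine mul_le_mul_of_nonneg_left ?_ (Real.exp_pos 1).le
          rw [← ha3]
          exact ha1.trans ha2
  have hnonneg : ∀ n, 0 ≤ hitLE (Rn n) B x (β n) :=
    fun n => Stmt18Aux.hit_nonneg (hRnn n) (hRdiag n) x (hβnn n)
  have hup : ∀ᶠ n in atTop, hitLE (Rn n) B x (β n)
      ≤ (Real.exp 1 / c) * (β n / θ n) := by
    filter_upwards [hcev] with n hn
    have hq : 0 ≤ β n / θ n := div_nonneg (hβnn n) (hθpos n).le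
    have hrc : (∑ z ∈ 𝒱 j, πn n z) / πn n x ≤ 1 / c := by
      rw [div_le_div_iff₀ (hπpos n x) hcpos]
      have := (le_div_iff₀ (hπsum n)).1 hn
      linarith
    calc hitLE (Rn n) B x (β n)
        ≤ Real.exp 1 * ((β n / θ n) * ((∑ z ∈ 𝒱 j, πn n z) / πn n x)) := key n
    _ ≤ Real.exp 1 * ((β n / θ n) * (1 / c)) := by
        refine mul_le_mul_of_nonneg_left ?_ (Real.exp_pos 1).le
        exact mul_le_mul_of_nonneg_left hrc hq
    _ = (Real.exp 1 / c) * (β n / θ n) := by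
        rw [div_eq_mul_inv, div_eq_mul_inv]
        ring
  have hg : Tendsto (fun n => (Real.exp 1 / c) * (β n / θ n)) atTop (𝓝 0) := by
    have := hβθ.const_mul (Real.exp 1 / c)
    simpa using this
  exact squeeze_zero' (Eventually.of_forall hnonneg) hup hg
end
end

section
/- Let X_t be an irreducible continuous-time Markov chain on a finite set V with stationary measure π, and let Y_t be its trace on a nonempty subset W with jump rates R_W(x,y) = λ(x) P_x[H_y = H^+_W]. Then the measure π conditioned to W, π_W(x) = π(x)/π(W), is the stationary state of the trace process Y_t. Moreover, if X is reversible with respect to π, then Y is reversible with respect to π_W. -/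
open Finset Filter Topology

noncomputable section

lemma maxprin {V : Type*} [Fintype V] (R : V → V → ℝ)
    (hR : ∀ x y, 0 ≤ R x y) (hirr : Irred R)
    (W : Finset V) (hWne : W.Nonempty)
    (d : V → ℝ) (hd0 : ∀ x ∈ W, d x = 0)
    (hharm : ∀ x, x ∉ W → ∑ w, R x w * (d w - d x) = 0) :
    ∀ z, d z ≤ 0 := by
  obtain ⟨w₀, hw₀⟩ := hWne
  have huniv : (Finset.univ : Finset V).Nonempty := ⟨w₀, mem_univ w₀⟩
  set m := Finset.univ.sup' huniv d with hmdef
  have hle : ∀ z, d z ≤ m := fun z => Finset.le_sup' d (mem_univ z)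
  suffices hm0 : m ≤ 0 by intro z; exact (hle z).trans hm0
  obtain ⟨z0, _, hz0⟩ := Finset.exists_mem_eq_sup' huniv d
  have key : ∀ a, Relation.ReflTransGen (fun a b => 0 < R a b) a w₀ → d a = m → m ≤ 0 := by
    intro a hpath
    induction hpath using Relation.ReflTransGen.head_induction_on with
    | refl => intro h; rw [← h, hd0 w₀ hw₀]
    | head hstep hpath ih =>
      rename_i a c
      intro hda
      by_cases haW : a ∈ W
      · rw [← hda, hd0 a haW]
      · have hsum := hharm a haW
        have hnp : ∀ w ∈ Finset.univ, R a w * (d w - d a) ≤ 0 := by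
          intro w _
          apply mul_nonpos_of_nonneg_of_nonpos (hR a w)
          have := hle w
          rw [← hda] at this
          linarith
        have hzero := (Finset.sum_eq_zero_iff_of_nonpos hnp).mp hsum c (mem_univ c)
        have hdc : d c = d a := by
          rcases mul_eq_zero.mp hzero with h | h
          · exact absurd h (ne_of_gt hstep)
          · linarith
        exact ih (hdc.trans hda)
  exact key z0 (hirr z0 w₀) hz0.symm

lemma harmzero {V : Type*} [Fintype V] (R : V → V → ℝ)
    (hR : ∀ x y, 0 ≤ R x y) (hirr : Irred R)
    (W : Finset V) (hWne : W.Nonempty)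
    (d : V → ℝ) (hd0 : ∀ x ∈ W, d x = 0)
    (hharm : ∀ x, x ∉ W → ∑ w, R x w * (d w - d x) = 0) :
    ∀ z, d z = 0 := by
  have h1 := maxprin R hR hirr W hWne d hd0 hharm
  have h2 := maxprin R hR hirr W hWne (fun z => -d z)
    (fun x hx => by simp [hd0 x hx])
    (by
      intro x hx
      have heq : ∑ w, R x w * (-d w - -d x) = -∑ w, R x w * (d w - d x) := by
        rw [← Finset.sum_neg_distrib]
        exact Finset.sum_congr rfl (fun w _ => by ring)
      rw [heq, hharm x hx, neg_zero])
  intro z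
  have := h2 z
  simp only [neg_nonpos] at this
  linarith [h1 z]

lemma statsum {V : Type*} [Fintype V] (R : V → V → ℝ) (π : V → ℝ)
    (hstat : Stationary R π) (f : V → ℝ) :
    ∑ z, π z * gen R f z = 0 := by
  unfold gen
  have expand : ∑ z, π z * ∑ w, R z w * (f w - f z)
      = (∑ z, ∑ w, π z * R z w * f w) - ∑ z, (π z * ∑ w, R z w) * f z := by
    rw [← Finset.sum_sub_distrib]
    refine Finset.sum_congr rfl (fun z _ => ?_)
    have h1 : (π z * ∑ w, R z w) * f z = ∑ w, π z * R z w * f z := by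
      rw [Finset.mul_sum, Finset.sum_mul]
    rw [h1, ← Finset.sum_sub_distrib, Finset.mul_sum]
    exact Finset.sum_congr rfl (fun w _ => by ring)
  rw [expand, sub_eq_zero, Finset.sum_comm]
  refine Finset.sum_congr rfl (fun w _ => ?_)
  rw [← Finset.sum_mul, hstat w]

lemma selfadj {V : Type*} [Fintype V] (R : V → V → ℝ) (π : V → ℝ)
    (hrev : Reversible R π) (f g : V → ℝ) :
    ∑ z, π z * (f z * gen R g z) = ∑ z, π z * (g z * gen R f z) := by
  unfold gen
  have expand : ∀ u v : V → ℝ, ∑ z, π z * (u z * ∑ w, R z w * (v w - v z))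
      = (∑ z, ∑ w, π z * R z w * u z * v w) - ∑ z, ∑ w, π z * R z w * u z * v z := by
    intro u v
    rw [← Finset.sum_sub_distrib]
    refine Finset.sum_congr rfl (fun z _ => ?_)
    rw [Finset.mul_sum, Finset.mul_sum, ← Finset.sum_sub_distrib]
    exact Finset.sum_congr rfl (fun w _ => by ring)
  rw [expand, expand]
  have hcross : ∑ z, ∑ w, π z * R z w * f z * g w = ∑ z, ∑ w, π z * R z w * g z * f w := by
    rw [Finset.sum_comm]
    refine Finset.sum_congr rfl (fun w _ => Finset.sum_congr rfl (fun z _ => ?_))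
    rw [show π z * R z w = π w * R w z from hrev z w]
    ring
  have hdiag : ∑ z, ∑ w, π z * R z w * f z * g z = ∑ z, ∑ w, π z * R z w * g z * f z :=
    Finset.sum_congr rfl (fun z _ => Finset.sum_congr rfl (fun w _ => by ring))
  rw [hcross, hdiag]

/-- the measure `π` conditioned to `W`, `π_W(x) = π(x)/π(W)`, is the
stationary state of the trace process on `W`, whose jump rates are
`R_W(x,y) = R(x,y) + ∑_{z∉W} R(x,z) P_z[X_{H_W} = y]` (via the harmonic measure `hm`);
and if `X` is reversible with respect to `π`, then the trace is reversible with respect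
to `π_W`. -/
theorem stmt19 {V : Type*} [Fintype V] [DecidableEq V]
    (R : V → V → ℝ) (π : V → ℝ)
    (hR : ∀ x y, 0 ≤ R x y) (hRdiag : ∀ x, R x x = 0)
    (hπ : ∀ x, 0 < π x) (hstat : Stationary R π) (hirr : Irred R)
    (W : Finset V) (hWne : W.Nonempty)
    (hm : V → V → ℝ)
    (hm0 : ∀ x ∈ W, ∀ y, hm x y = if x = y then 1 else 0)
    (hmh : ∀ x, x ∉ W → ∀ y, gen R (fun z => hm z y) x = 0)
    (RW : V → V → ℝ)
    (hRW : ∀ x ∈ W, ∀ y ∈ W, x ≠ y → RW x y = R x y + ∑ z ∈ Wᶜ, R x z * hm z y)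
    (hRWdiag : ∀ x, RW x x = 0) :
    (∀ y ∈ W,
      ∑ x ∈ W.erase y, (π x / ∑ z ∈ W, π z) * RW x y
        = (π y / ∑ z ∈ W, π z) * ∑ x ∈ W.erase y, RW y x) ∧
    (Reversible R π → ∀ x ∈ W, ∀ y ∈ W,
      (π x / ∑ z ∈ W, π z) * RW x y = (π y / ∑ z ∈ W, π z) * RW y x) := by
  have hπWpos : 0 < ∑ z ∈ W, π z := Finset.sum_pos (fun z _ => hπ z) hWne
  set πW := ∑ z ∈ W, π z with hπWdef
  -- the harmonic measure sums to 1
  have hg : ∀ z, (∑ x ∈ W, hm z x) = 1 := by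
    have hz := harmzero R hR hirr W hWne (fun z => (∑ x ∈ W, hm z x) - 1)
      (by
        intro x hx
        rw [Finset.sum_congr rfl (fun y _ => hm0 x hx y), Finset.sum_ite_eq W x (fun _ => (1:ℝ)),
          if_pos hx, sub_self])
      (by
        intro z hz
        have hterm : ∀ w, R z w * (((∑ x ∈ W, hm w x) - 1) - ((∑ x ∈ W, hm z x) - 1))
            = ∑ x ∈ W, R z w * (hm w x - hm z x) := by
          intro w
          rw [sub_sub_sub_cancel_right, ← Finset.sum_sub_distrib, Finset.mul_sum]
        calc ∑ w, R z w * ((fun z => (∑ x ∈ W, hm z x) - 1) w - (fun z => (∑ x ∈ W, hm z x) - 1) z)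
            = ∑ w, ∑ x ∈ W, R z w * (hm w x - hm z x) :=
              Finset.sum_congr rfl (fun w _ => hterm w)
          _ = ∑ x ∈ W, ∑ w, R z w * (hm w x - hm z x) := Finset.sum_comm
          _ = 0 := Finset.sum_eq_zero (fun x _ => hmh z hz x))
    intro z
    have := hz z
    linarith
  -- off-diagonal generator value equals the trace rate
  have lemA : ∀ x ∈ W, ∀ y ∈ W, x ≠ y → gen R (fun w => hm w y) x = RW x y := by
    intro x hx y hy hxy
    unfold gen
    have hx0 : hm x y = 0 := by rw [hm0 x hx y, if_neg hxy]
    have h1 : ∑ z, R x z * (hm z y - hm x y) = ∑ z, R x z * hm z y := by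
      rw [hx0]; exact Finset.sum_congr rfl (fun z _ => by ring)
    rw [h1, ← Finset.sum_add_sum_compl W (fun z => R x z * hm z y)]
    have h2 : ∑ z ∈ W, R x z * hm z y = R x y := by
      rw [Finset.sum_congr rfl (fun z hz => by rw [hm0 z hz y])]
      rw [Finset.sum_congr rfl (fun z _ => by
        rw [mul_ite, mul_one, mul_zero] : ∀ z ∈ W,
          R x z * (if z = y then (1:ℝ) else 0) = if z = y then R x z else 0)]
      rw [Finset.sum_ite_eq' W y (fun z => R x z), if_pos hy]
    rw [h2, hRW x hx y hy hxy]
  -- diagonal generator value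
  have lemB : ∀ y ∈ W, gen R (fun w => hm w y) y = -∑ x ∈ W.erase y, RW y x := by
    intro y hy
    unfold gen
    have hy1 : hm y y = 1 := by rw [hm0 y hy y, if_pos rfl]
    have h1 : ∑ z, R y z * (hm z y - hm y y) = ∑ z, R y z * (hm z y - 1) := by
      rw [hy1]
    rw [h1, ← Finset.sum_add_sum_compl W (fun z => R y z * (hm z y - 1))]
    have h2 : ∑ z ∈ W, R y z * (hm z y - 1) = -∑ z ∈ W.erase y, R y z := by
      rw [← Finset.sum_erase_add W _ hy, hy1, sub_self, mul_zero, add_zero,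
        ← Finset.sum_neg_distrib]
      refine Finset.sum_congr rfl (fun z hz => ?_)
      have hzy : z ≠ y := Finset.ne_of_mem_erase hz
      rw [hm0 z (Finset.mem_of_mem_erase hz) y, if_neg hzy]
      ring
    have h3 : -∑ x ∈ W.erase y, RW y x
        = -∑ x ∈ W.erase y, R y x - ∑ z ∈ Wᶜ, R y z * (1 - hm z y) := by
      have h4 : ∑ x ∈ W.erase y, RW y x
          = ∑ x ∈ W.erase y, R y x + ∑ x ∈ W.erase y, ∑ z ∈ Wᶜ, R y z * hm z x := by
        rw [← Finset.sum_add_distrib]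
        refine Finset.sum_congr rfl (fun x hx => ?_)
        exact hRW y hy x (Finset.mem_of_mem_erase hx) (Finset.ne_of_mem_erase hx).symm
      have h5 : ∑ x ∈ W.erase y, ∑ z ∈ Wᶜ, R y z * hm z x = ∑ z ∈ Wᶜ, R y z * (1 - hm z y) := by
        rw [Finset.sum_comm]
        refine Finset.sum_congr rfl (fun z _ => ?_)
        rw [← Finset.mul_sum]
        congr 1
        have := Finset.sum_erase_add W (fun x => hm z x) hy
        have hgz := hg z
        linarith
      rw [h4, h5]; ring
    rw [h2, h3]
    have h6 : ∑ z ∈ Wᶜ, R y z * (hm z y - 1) = -∑ z ∈ Wᶜ, R y z * (1 - hm z y) := by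
      rw [← Finset.sum_neg_distrib]
      exact Finset.sum_congr rfl (fun z _ => by ring)
    rw [h6]; ring
  constructor
  · -- stationarity of the trace
    intro y hy
    have h0 := statsum R π hstat (fun w => hm w y)
    have hcompl : ∑ x ∈ Wᶜ, π x * gen R (fun w => hm w y) x = 0 :=
      Finset.sum_eq_zero (fun x hx => by rw [hmh x (Finset.mem_compl.mp hx) y, mul_zero])
    have h1 : ∑ x ∈ W, π x * gen R (fun w => hm w y) x = 0 := by
      rw [← Finset.sum_add_sum_compl W (fun x => π x * gen R (fun w => hm w y) x), hcompl,
        add_zero] at h0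
      exact h0
    rw [← Finset.sum_erase_add W _ hy, lemB y hy] at h1
    have h2 : ∑ x ∈ W.erase y, π x * gen R (fun w => hm w y) x
        = ∑ x ∈ W.erase y, π x * RW x y :=
      Finset.sum_congr rfl (fun x hx => by
        rw [lemA x (Finset.mem_of_mem_erase hx) y hy (Finset.ne_of_mem_erase hx)])
    rw [h2] at h1
    have hkey : ∑ x ∈ W.erase y, π x * RW x y = π y * ∑ x ∈ W.erase y, RW y x := by
      linarith
    calc ∑ x ∈ W.erase y, π x / πW * RW x y
        = (∑ x ∈ W.erase y, π x * RW x y) / πW := by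
          rw [Finset.sum_div]
          exact Finset.sum_congr rfl (fun x _ => by ring)
      _ = (π y * ∑ x ∈ W.erase y, RW y x) / πW := by rw [hkey]
      _ = π y / πW * ∑ x ∈ W.erase y, RW y x := by ring
  · -- reversibility of the trace
    intro hrev x hx y hy
    by_cases hxy : x = y
    · subst hxy; rfl
    have hsa := selfadj R π hrev (fun w => hm w x) (fun w => hm w y)
    have pick : ∀ a ∈ W, ∀ G : V → ℝ, (∀ z, z ∉ W → G z = 0) →
        ∑ z, π z * (hm z a * G z) = π a * G a := by
      intro a ha G hG
      rw [← Finset.sum_add_sum_compl W (fun z => π z * (hm z a * G z))]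
      have c1 : ∑ z ∈ Wᶜ, π z * (hm z a * G z) = 0 :=
        Finset.sum_eq_zero (fun z hz => by rw [hG z (Finset.mem_compl.mp hz), mul_zero, mul_zero])
      have c2 : ∑ z ∈ W, π z * (hm z a * G z) = π a * G a := by
        rw [Finset.sum_congr rfl (fun z hz => by
          rw [hm0 z hz a] :
          ∀ z ∈ W, π z * (hm z a * G z) = π z * ((if z = a then (1:ℝ) else 0) * G z))]
        rw [Finset.sum_congr rfl (fun z _ => by
          by_cases h : z = a <;> simp [h] :
          ∀ z ∈ W, π z * ((if z = a then (1:ℝ) else 0) * G z)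
            = if z = a then π z * G z else 0)]
        rw [Finset.sum_ite_eq' W a (fun z => π z * G z), if_pos ha]
      rw [c1, c2, add_zero]
    rw [pick x hx (gen R (fun w => hm w y)) (fun z hz => hmh z hz y),
      pick y hy (gen R (fun w => hm w x)) (fun z hz => hmh z hz x)] at hsa
    rw [lemA x hx y hy hxy, lemA y hy x hx (Ne.symm hxy)] at hsa
    calc π x / πW * RW x y = (π x * RW x y) / πW := by ring
      _ = (π y * RW y x) / πW := by rw [hsa]
      _ = π y / πW * RW y x := by ring
end
end
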